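/- arXiv:1803.06755 — 3 statements merged into one kernel-verified Lean document; each statement's English description precedes it below -/
import Mathlib

section
/- Let (A, D, χ) be an abelian category with exact duality. Suppose γ : c → Dc is a symmetric form, j : b ↪ c is a subobject with restricted form β = Dj ∘ γ ∘ j, and i : a ↪ b is a subobject with Di ∘ β ∘ i = 0 (so a is isotropic for both β and γ). Then there is a monomorphism j/a : a^⊥_β / a → a^⊥_γ / a between the isotropic reductions' underlying objects such that the reduction of the restriction equals the restriction of the reduction: (γ|_j)/a = (γ/a)|_{j/a}. -/
open CategoryTheory CategoryTheory.Limits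

universe v u v₁ u₁ v₂ u₂ v₃ u₃

/-- A (contravariant) duality on a preadditive category: a triple `(D, χ)` where `D` is an
additive contravariant endofunctor and `χ : id → D ∘ D^op` is a natural isomorphism such that
`D χ_a ∘ χ_{D a} = id`. -/
structure PreDuality (A : Type u) [Category.{v} A] [Preadditive A] where
  obj : A → A
  map : ∀ {X Y : A}, (X ⟶ Y) → (obj Y ⟶ obj X)
  map_id : ∀ X : A, map (𝟙 X) = 𝟙 (obj X)
  map_comp : ∀ {X Y Z : A} (f : X ⟶ Y) (g : Y ⟶ Z), map (f ≫ g) = map g ≫ map f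
  map_add : ∀ {X Y : A} (f g : X ⟶ Y), map (f + g) = map f + map g
  χ : ∀ X : A, X ⟶ obj (obj X)
  χ_iso : ∀ X : A, IsIso (χ X)
  χ_natural : ∀ {X Y : A} (f : X ⟶ Y), f ≫ χ Y = χ X ≫ map (map f)
  triangle : ∀ X : A, χ (obj X) ≫ map (χ X) = 𝟙 (obj X)

namespace PreDuality

variable {A : Type u} [Category.{v} A] [Preadditive A] (𝒟 : PreDuality A)

lemma map_zero (X Y : A) : 𝒟.map (0 : X ⟶ Y) = 0 := by
  have h := 𝒟.map_add (0 : X ⟶ Y) 0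
  rw [add_zero] at h
  exact (add_eq_left).mp h.symm

lemma map_neg {X Y : A} (f : X ⟶ Y) : 𝒟.map (-f) = -𝒟.map f := by
  have h := 𝒟.map_add f (-f)
  rw [add_neg_cancel, 𝒟.map_zero] at h
  exact eq_neg_of_add_eq_zero_right h.symm

/-- The "opposite-sign" duality `(D, -χ)`; its symmetric forms are the antisymmetric forms
for `(D, χ)`. -/
def neg : PreDuality A where
  obj := 𝒟.obj
  map := 𝒟.map
  map_id := 𝒟.map_id
  map_comp := 𝒟.map_comp
  map_add := 𝒟.map_add
  χ X := -𝒟.χ X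
  χ_iso X := by
    have := 𝒟.χ_iso X
    exact ⟨⟨-(inv (𝒟.χ X)), by simp, by simp⟩⟩
  χ_natural f := by
    rw [Preadditive.comp_neg, Preadditive.neg_comp, 𝒟.χ_natural]
  triangle X := by
    try dsimp only
    rw [𝒟.map_neg, Preadditive.neg_comp, Preadditive.comp_neg, neg_neg, 𝒟.triangle]

end PreDuality

section Forms

variable {A : Type u} [Category.{v} A] [Preadditive A]

/-- A symmetric bilinear form in a category with duality: a morphism `β : b ⟶ D b`
with `β = D β ∘ χ_b`.  (Antisymmetric forms are symmetric forms for `𝒟.neg`.) -/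
structure SymmForm (𝒟 : PreDuality A) where
  carrier : A
  form : carrier ⟶ 𝒟.obj carrier
  symm : form = 𝒟.χ carrier ≫ 𝒟.map form

namespace SymmForm

variable {𝒟 : PreDuality A}

/-- A form is non-degenerate if the underlying morphism is an isomorphism. -/
def Nondeg (β : SymmForm 𝒟) : Prop := IsIso β.form

/-- The restriction `β|_f = D f ∘ β ∘ f` of a symmetric form along a morphism `f`. -/
def restrict (β : SymmForm 𝒟) {a : A} (f : a ⟶ β.carrier) : SymmForm 𝒟 where
  carrier := a
  form := f ≫ β.form ≫ 𝒟.map f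
  symm := by
    have h : 𝒟.map (f ≫ β.form ≫ 𝒟.map f)
        = 𝒟.map (𝒟.map f) ≫ 𝒟.map β.form ≫ 𝒟.map f := by
      rw [𝒟.map_comp, 𝒟.map_comp, Category.assoc]
    rw [h, ← Category.assoc (𝒟.χ a), ← 𝒟.χ_natural f, Category.assoc,
      ← Category.assoc (𝒟.χ β.carrier), ← β.symm]

lemma restrict_symm (β : SymmForm 𝒟) {a : A} (f : a ⟶ β.carrier) :
    f ≫ β.form ≫ 𝒟.map f = 𝒟.χ a ≫ 𝒟.map (f ≫ β.form ≫ 𝒟.map f) :=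
  (β.restrict f).symm

/-- Orthogonal direct sum of symmetric forms. -/
noncomputable def orthSum [HasBinaryBiproducts A] (β₁ β₂ : SymmForm 𝒟) : SymmForm 𝒟 where
  carrier := β₁.carrier ⊞ β₂.carrier
  form := biprod.desc (β₁.form ≫ 𝒟.map biprod.fst) (β₂.form ≫ 𝒟.map biprod.snd)
  symm := by
    apply biprod.hom_ext'
    · rw [biprod.inl_desc]
      have h1 : biprod.inl ≫ 𝒟.χ (β₁.carrier ⊞ β₂.carrier)
          = 𝒟.χ β₁.carrier ≫ 𝒟.map (𝒟.map (biprod.inl : β₁.carrier ⟶ _)) :=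
        𝒟.χ_natural _
      rw [← Category.assoc, h1, Category.assoc, ← 𝒟.map_comp]
      have h2 : biprod.desc (β₁.form ≫ 𝒟.map biprod.fst) (β₂.form ≫ 𝒟.map biprod.snd) ≫
          𝒟.map (biprod.inl : β₁.carrier ⟶ _) = biprod.fst ≫ β₁.form := by
        apply biprod.hom_ext'
        · rw [← Category.assoc, biprod.inl_desc, Category.assoc, ← 𝒟.map_comp,
            biprod.inl_fst, 𝒟.map_id, Category.comp_id, ← Category.assoc, biprod.inl_fst,
            Category.id_comp]
        · rw [← Category.assoc, biprod.inr_desc, Category.assoc, ← 𝒟.map_comp,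
            biprod.inl_snd, 𝒟.map_zero, Limits.comp_zero, ← Category.assoc, biprod.inr_fst,
            Limits.zero_comp]
      rw [h2, 𝒟.map_comp, ← Category.assoc, ← β₁.symm]
    · rw [biprod.inr_desc]
      have h1 : biprod.inr ≫ 𝒟.χ (β₁.carrier ⊞ β₂.carrier)
          = 𝒟.χ β₂.carrier ≫ 𝒟.map (𝒟.map (biprod.inr : β₂.carrier ⟶ _)) :=
        𝒟.χ_natural _
      rw [← Category.assoc, h1, Category.assoc, ← 𝒟.map_comp]
      have h2 : biprod.desc (β₁.form ≫ 𝒟.map biprod.fst) (β₂.form ≫ 𝒟.map biprod.snd) ≫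
          𝒟.map (biprod.inr : β₂.carrier ⟶ _) = biprod.snd ≫ β₂.form := by
        apply biprod.hom_ext'
        · rw [← Category.assoc, biprod.inl_desc, Category.assoc, ← 𝒟.map_comp,
            biprod.inr_fst, 𝒟.map_zero, Limits.comp_zero, ← Category.assoc, biprod.inl_snd,
            Limits.zero_comp]
        · rw [← Category.assoc, biprod.inr_desc, Category.assoc, ← 𝒟.map_comp,
            biprod.inr_snd, 𝒟.map_id, Category.comp_id, ← Category.assoc, biprod.inr_snd,
            Category.id_comp]
      rw [h2, 𝒟.map_comp, ← Category.assoc, ← β₂.symm]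

end SymmForm

/-- Two symmetric forms are isometric if they correspond under an isomorphism of the
underlying objects. -/
def Isometric' {𝒟 : PreDuality A} (α β : SymmForm 𝒟) : Prop :=
  ∃ f : α.carrier ⟶ β.carrier, IsIso f ∧ α.form = f ≫ β.form ≫ 𝒟.map f

/-- A subobject (given by a monomorphism `i`) is isotropic for `β` if `β|_i = 0`. -/
def IsIsotropic {𝒟 : PreDuality A} (β : SymmForm 𝒟) {a : A} (i : a ⟶ β.carrier) : Prop :=
  Mono i ∧ i ≫ β.form ≫ 𝒟.map i = 0

/-- A symmetric form is anisotropic if it has no non-zero isotropic subobject. -/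
def Anisotropic {𝒟 : PreDuality A} (β : SymmForm 𝒟) : Prop :=
  ∀ (a : A) (i : a ⟶ β.carrier), Mono i → i ≫ β.form ≫ 𝒟.map i = 0 → IsZero a

end Forms

section AbelianDuality

variable {A : Type u} [Category.{v} A] [Abelian A]

/-- An exact duality on an abelian category: a duality whose underlying additive
contravariant functor is exact, i.e. takes cokernels to kernels and kernels to cokernels. -/
structure Duality (A : Type u) [Category.{v} A] [Abelian A] extends PreDuality A where
  dualCokernelIsKernel : ∀ {X Y : A} (f : X ⟶ Y),
    IsLimit (KernelFork.ofι (f := toPreDuality.map f) (toPreDuality.map (cokernel.π f))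
      (by rw [← toPreDuality.map_comp, cokernel.condition, toPreDuality.map_zero]))
  dualKernelIsCokernel : ∀ {X Y : A} (f : X ⟶ Y),
    IsColimit (CokernelCofork.ofπ (f := toPreDuality.map f) (toPreDuality.map (kernel.ι f))
      (by rw [← toPreDuality.map_comp, kernel.condition, toPreDuality.map_zero]))

/-- Abbreviation for the underlying duality data. -/
abbrev Duality.P (𝒟 : Duality A) : PreDuality A := 𝒟.toPreDuality

/-- The negative `(D, -χ)` of an exact duality. -/
def Duality.neg (𝒟 : Duality A) : Duality A where
  toPreDuality := 𝒟.toPreDuality.neg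
  dualCokernelIsKernel := 𝒟.dualCokernelIsKernel
  dualKernelIsCokernel := 𝒟.dualKernelIsCokernel

namespace SymmForm

variable {𝒟 : Duality A} (β : SymmForm 𝒟.P) {a : A} (i : a ⟶ β.carrier)
  (hiso : i ≫ β.form ≫ 𝒟.P.map i = 0)

/-- The factorisation of an isotropic `i : a ⟶ b` through the orthogonal complement
`a^⊥ = ker (D i ∘ β)`. -/
noncomputable def perpLift : a ⟶ kernel (β.form ≫ 𝒟.P.map i) :=
  kernel.lift _ i hiso

lemma reduce_h1 :
    perpLift β i hiso ≫ (kernel.ι (β.form ≫ 𝒟.P.map i) ≫ β.form ≫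
      𝒟.P.map (kernel.ι (β.form ≫ 𝒟.P.map i))) = 0 := by
  have hpcι : perpLift β i hiso ≫ kernel.ι (β.form ≫ 𝒟.P.map i) = i := kernel.lift_ι _ _ _
  have e1 : i ≫ β.form = 𝒟.P.χ a ≫ 𝒟.P.map (β.form ≫ 𝒟.P.map i) := by
    conv_lhs => rw [β.symm]
    rw [← Category.assoc, 𝒟.P.χ_natural i, Category.assoc, ← 𝒟.P.map_comp]
  rw [← Category.assoc, hpcι, ← Category.assoc, e1, Category.assoc, ← 𝒟.P.map_comp,
    kernel.condition, 𝒟.P.map_zero, Limits.comp_zero]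

/-- The degenerate form `β` restricted to `a^⊥`, descended to `a^⊥/a`. -/
noncomputable def reducePre :
    cokernel (perpLift β i hiso) ⟶
      𝒟.P.obj (kernel (β.form ≫ 𝒟.P.map i)) :=
  cokernel.desc _ _ (reduce_h1 β i hiso)

lemma perpLift_ι :
    perpLift β i hiso ≫ kernel.ι (β.form ≫ 𝒟.P.map i) = i :=
  kernel.lift_ι _ _ _

lemma reduce_h2 :
    reducePre β i hiso ≫ 𝒟.P.map (perpLift β i hiso) = 0 := by
  rw [← cancel_epi (cokernel.π (perpLift β i hiso)), Limits.comp_zero, ← Category.assoc,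
    reducePre, cokernel.π_desc, Category.assoc, Category.assoc, ← 𝒟.P.map_comp,
    perpLift_ι]
  exact kernel.condition _

/-- Isotropic reduction `β/a` of a symmetric form along an isotropic morphism `i : a ⟶ b`:
the induced symmetric form on `a^⊥/a`, where `a^⊥ = ker (D i ∘ β)`. -/
noncomputable def reduce : SymmForm 𝒟.P where
  carrier := cokernel (perpLift β i hiso)
  form := (KernelFork.IsLimit.lift' (𝒟.dualCokernelIsKernel (perpLift β i hiso))
    (reducePre β i hiso) (reduce_h2 β i hiso)).1
  symm := by
    set φv := (KernelFork.IsLimit.lift' (𝒟.dualCokernelIsKernel (perpLift β i hiso))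
      (reducePre β i hiso) (reduce_h2 β i hiso)).1 with hv
    have hφ : φv ≫ 𝒟.P.map (cokernel.π (perpLift β i hiso)) = reducePre β i hiso :=
      (KernelFork.IsLimit.lift' (𝒟.dualCokernelIsKernel (perpLift β i hiso))
        (reducePre β i hiso) (reduce_h2 β i hiso)).2
    have hπs : cokernel.π (perpLift β i hiso) ≫ reducePre β i hiso
        = kernel.ι (β.form ≫ 𝒟.P.map i) ≫ β.form ≫
            𝒟.P.map (kernel.ι (β.form ≫ 𝒟.P.map i)) :=
      cokernel.π_desc _ _ _
    apply Fork.IsLimit.hom_ext (𝒟.dualCokernelIsKernel (perpLift β i hiso))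
    show φv ≫ 𝒟.P.map (cokernel.π (perpLift β i hiso)) =
        (𝒟.P.χ _ ≫ 𝒟.P.map φv) ≫ 𝒟.P.map (cokernel.π (perpLift β i hiso))
    have key : 𝒟.P.map (𝒟.P.map (cokernel.π (perpLift β i hiso))) ≫ 𝒟.P.map φv ≫
        𝒟.P.map (cokernel.π (perpLift β i hiso))
        = 𝒟.P.map (kernel.ι (β.form ≫ 𝒟.P.map i) ≫ β.form ≫
            𝒟.P.map (kernel.ι (β.form ≫ 𝒟.P.map i))) := by
      rw [← 𝒟.P.map_comp, ← 𝒟.P.map_comp, Category.assoc, hφ, hπs]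
    rw [hφ, ← cancel_epi (cokernel.π (perpLift β i hiso)), hπs, Category.assoc,
      ← Category.assoc (cokernel.π (perpLift β i hiso)) (𝒟.P.χ _),
      𝒟.P.χ_natural (cokernel.π (perpLift β i hiso)), Category.assoc, key]
    exact β.restrict_symm _

/-- Reduction of a symmetric form by the kernel: the induced non-degenerate form on the
image of `β`. -/
noncomputable def reduceKernel : SymmForm 𝒟.P :=
  β.reduce (kernel.ι β.form) (by rw [← Category.assoc, kernel.condition, Limits.zero_comp])

lemma form_comp_map_kernel : β.form ≫ 𝒟.P.map (kernel.ι β.form) = 0 := by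
  have h := congrArg (fun g => 𝒟.P.χ β.carrier ≫ 𝒟.P.map g) (kernel.condition β.form)
  simp only [𝒟.P.map_comp, 𝒟.P.map_zero, Limits.comp_zero] at h
  rw [← Category.assoc, ← β.symm] at h
  exact h

/-- The canonical quotient map `b ⟶ im β` onto (the reduction model of) the image of `β`. -/
noncomputable def kerQuot : β.carrier ⟶ β.reduceKernel.carrier :=
  kernel.lift _ (𝟙 _) (by rw [Category.id_comp]; exact β.form_comp_map_kernel) ≫ cokernel.π _

end SymmForm

end AbelianDuality

section Witt

variable {A : Type u} [Category.{v} A] [Preadditive A]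

/-- A lagrangian of a symmetric form: an isotropic subobject `i : a ⟶ b` such that
`0 ⟶ a ⟶ b ⟶ D a ⟶ 0` (with second map `D i ∘ β`) is short exact. -/
def SymmForm.IsLagrangian [Abelian A] {𝒟 : PreDuality A} (β : SymmForm 𝒟) {a : A}
    (i : a ⟶ β.carrier) : Prop :=
  Mono i ∧ Epi (β.form ≫ 𝒟.map i) ∧
    ∃ w : i ≫ (β.form ≫ 𝒟.map i) = 0,
      (CategoryTheory.ShortComplex.mk i (β.form ≫ 𝒟.map i) w).Exact

/-- A metabolic form: a non-degenerate symmetric form admitting a lagrangian. -/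
def SymmForm.Metabolic [Abelian A] {𝒟 : PreDuality A} (β : SymmForm 𝒟) : Prop :=
  IsIso β.form ∧ ∃ (a : A) (i : a ⟶ β.carrier), β.IsLagrangian i

/-- Witt equivalence with respect to a class `M` of "metabolic" forms: stable isometry. -/
def WittEquivBy [HasBinaryBiproducts A] {𝒟 : PreDuality A} (M : SymmForm 𝒟 → Prop)
    (β₁ β₂ : SymmForm 𝒟) : Prop :=
  ∃ η₁ η₂ : SymmForm 𝒟, M η₁ ∧ M η₂ ∧ Isometric' (β₁.orthSum η₁) (β₂.orthSum η₂)


variable (𝒟 : PreDuality A)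

/-- Non-degenerate symmetric forms with carrier in a given class `P` of objects. -/
abbrev NDForm (P : A → Prop) : Type (max u v) :=
  {β : SymmForm 𝒟 // IsIso β.form ∧ P β.carrier}

/-- The subgroup of relations defining the Witt group: `[β₁ ⊕ β₂] = [β₁] + [β₂]` and
`[η] = 0` for `η` metabolic. -/
def wittRel [HasBinaryBiproducts A] (M : SymmForm 𝒟 → Prop) (P : A → Prop) :
    AddSubgroup (FreeAbelianGroup (NDForm 𝒟 P)) :=
  AddSubgroup.closure
    ({x | ∃ (β₁ β₂ : NDForm 𝒟 P) (h : IsIso (β₁.1.orthSum β₂.1).form)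
        (hP : P (β₁.1.orthSum β₂.1).carrier),
        x = FreeAbelianGroup.of (⟨β₁.1.orthSum β₂.1, h, hP⟩ : NDForm 𝒟 P)
          - FreeAbelianGroup.of β₁ - FreeAbelianGroup.of β₂} ∪
     {x | ∃ (β₁ β₂ : NDForm 𝒟 P), Isometric' β₁.1 β₂.1 ∧
        x = FreeAbelianGroup.of β₁ - FreeAbelianGroup.of β₂} ∪
     {x | ∃ η : NDForm 𝒟 P, M η.1 ∧ x = FreeAbelianGroup.of η})

/-- The Witt group of non-degenerate symmetric forms (with carrier in `P`), modulo metabolic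
forms `M`, presented as the quotient of the free abelian group on non-degenerate symmetric
forms by the sum, isometry and metabolic relations. -/
def WittGroup [HasBinaryBiproducts A] (M : SymmForm 𝒟 → Prop) (P : A → Prop) :
    Type (max u v) :=
  FreeAbelianGroup (NDForm 𝒟 P) ⧸ wittRel 𝒟 M P

noncomputable instance [HasBinaryBiproducts A] (M : SymmForm 𝒟 → Prop) (P : A → Prop) :
    AddCommGroup (WittGroup 𝒟 M P) :=
  inferInstanceAs (AddCommGroup (FreeAbelianGroup (NDForm 𝒟 P) ⧸ wittRel 𝒟 M P))

/-- The Witt class of a non-degenerate symmetric form. -/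
def wittClsP [HasBinaryBiproducts A] (M : SymmForm 𝒟 → Prop) (P : A → Prop)
    (β : SymmForm 𝒟) (h : IsIso β.form) (hP : P β.carrier) : WittGroup 𝒟 M P :=
  QuotientAddGroup.mk (FreeAbelianGroup.of (⟨β, h, hP⟩ : NDForm 𝒟 P))

end Witt

section AWitt

variable {A : Type u} [Category.{v} A] [Abelian A]

/-- Witt equivalence of symmetric forms in an abelian category: stable isometry by
metabolic forms. -/
def WittEquiv {𝒟 : PreDuality A} (β₁ β₂ : SymmForm 𝒟) : Prop :=
  WittEquivBy SymmForm.Metabolic β₁ β₂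

/-- The Witt group `W(𝒜)` of an abelian category with duality. -/
def AWitt (𝒟 : Duality A) : Type (max u v) :=
  WittGroup 𝒟.P SymmForm.Metabolic (fun _ => True)

noncomputable instance (𝒟 : Duality A) : AddCommGroup (AWitt 𝒟) :=
  inferInstanceAs (AddCommGroup (WittGroup 𝒟.P SymmForm.Metabolic (fun _ => True)))

/-- The Witt class `[β] ∈ W(𝒜)` of a non-degenerate symmetric form. -/
def aCls (𝒟 : Duality A) (β : SymmForm 𝒟.P) (h : IsIso β.form) : AWitt 𝒟 :=
  wittClsP 𝒟.P SymmForm.Metabolic (fun _ => True) β h trivial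

/-- The Witt group `W₋(𝒜)` of antisymmetric forms. -/
def AWittNeg (𝒟 : Duality A) : Type (max u v) := AWitt 𝒟.neg

noncomputable instance (𝒟 : Duality A) : AddCommGroup (AWittNeg 𝒟) :=
  inferInstanceAs (AddCommGroup (AWitt 𝒟.neg))

end AWitt

section DualityFunctor

variable {A : Type u} {B : Type u₁} [Category.{v} A] [Category.{v₁} B]
  [Preadditive A] [Preadditive B]

/-- An additive functor commuting with dualities. -/
structure DualityFunctor (𝒟₁ : PreDuality A) (𝒟₂ : PreDuality B) where
  F : A ⥤ B
  additive : F.Additive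
  η : ∀ X : A, F.obj (𝒟₁.obj X) ≅ 𝒟₂.obj (F.obj X)
  η_natural : ∀ {X Y : A} (f : X ⟶ Y),
    F.map (𝒟₁.map f) ≫ (η X).hom = (η Y).hom ≫ 𝒟₂.map (F.map f)
  χ_compat : ∀ X : A,
    F.map (𝒟₁.χ X) ≫ (η (𝒟₁.obj X)).hom ≫ 𝒟₂.map ((η X).inv) = 𝒟₂.χ (F.obj X)

namespace DualityFunctor

variable {𝒟₁ : PreDuality A} {𝒟₂ : PreDuality B} (Φ : DualityFunctor 𝒟₁ 𝒟₂)

/-- The image of a symmetric form under a functor commuting with dualities. -/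
def mapForm (β : SymmForm 𝒟₁) : SymmForm 𝒟₂ where
  carrier := Φ.F.obj β.carrier
  form := Φ.F.map β.form ≫ (Φ.η β.carrier).hom
  symm := by
    have h0 : 𝒟₂.map (Φ.F.map β.form ≫ (Φ.η β.carrier).hom)
        = 𝒟₂.map (Φ.η β.carrier).hom ≫ 𝒟₂.map (Φ.F.map β.form) := 𝒟₂.map_comp _ _
    rw [h0, ← Φ.χ_compat β.carrier, Category.assoc, Category.assoc]
    have h1 : 𝒟₂.map ((Φ.η β.carrier).inv) ≫ 𝒟₂.map ((Φ.η β.carrier).hom) = 𝟙 _ := by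
      rw [← 𝒟₂.map_comp, Iso.hom_inv_id, 𝒟₂.map_id]
    rw [← Category.assoc (𝒟₂.map ((Φ.η β.carrier).inv)), h1, Category.id_comp,
      ← Φ.η_natural β.form, ← Category.assoc, ← Φ.F.map_comp, ← β.symm]

lemma mapForm_nondeg (β : SymmForm 𝒟₁) (h : IsIso β.form) : IsIso (Φ.mapForm β).form := by
  show IsIso (Φ.F.map β.form ≫ (Φ.η β.carrier).hom)
  have : IsIso (Φ.F.map β.form) := inferInstance
  exact IsIso.comp_isIso

end DualityFunctor

end DualityFunctor

section DFMore

variable {A : Type u} {B : Type u₁} {C : Type u₂} [Category.{v} A] [Category.{v₁} B]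
  [Category.{v₂} C] [Preadditive A] [Preadditive B] [Preadditive C]

/-- The identity duality functor. -/
def DualityFunctor.id (𝒟 : PreDuality A) : DualityFunctor 𝒟 𝒟 where
  F := 𝟭 A
  additive := inferInstance
  η X := Iso.refl _
  η_natural f := by simp
  χ_compat X := by simp [𝒟.map_id]

/-- Composition of duality functors. -/
def DualityFunctor.comp {𝒟₁ : PreDuality A} {𝒟₂ : PreDuality B} {𝒟₃ : PreDuality C}
    (Φ : DualityFunctor 𝒟₁ 𝒟₂) (Ψ : DualityFunctor 𝒟₂ 𝒟₃) : DualityFunctor 𝒟₁ 𝒟₃ where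
  F := Φ.F ⋙ Ψ.F
  additive := by
    have := Φ.additive
    have := Ψ.additive
    exact Functor.instAdditiveComp _ _
  η X := Ψ.F.mapIso (Φ.η X) ≪≫ Ψ.η (Φ.F.obj X)
  η_natural {X Y} f := by
    dsimp
    rw [← Category.assoc, ← Ψ.F.map_comp, Φ.η_natural f, Ψ.F.map_comp, Category.assoc,
      Ψ.η_natural (Φ.F.map f), ← Category.assoc]
  χ_compat X := by
    dsimp
    have h1 := Ψ.η_natural ((Φ.η X).inv)
    have h2 : 𝒟₃.map ((Ψ.η (Φ.F.obj X)).inv ≫ Ψ.F.map ((Φ.η X).inv))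
        = 𝒟₃.map (Ψ.F.map ((Φ.η X).inv)) ≫ 𝒟₃.map ((Ψ.η (Φ.F.obj X)).inv) :=
      𝒟₃.map_comp _ _
    rw [h2]
    simp only [Category.assoc]
    rw [← Category.assoc ((Ψ.η (Φ.F.obj (𝒟₁.obj X))).hom), ← h1]
    simp only [Category.assoc]
    slice_lhs 1 3 => rw [← Ψ.F.map_comp, ← Ψ.F.map_comp]
    rw [Φ.χ_compat X]
    simp only [Category.assoc]
    exact Ψ.χ_compat (Φ.F.obj X)

/-- A duality functor between the negated dualities. -/
def DualityFunctor.negD {𝒟₁ : PreDuality A} {𝒟₂ : PreDuality B}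
    (Φ : DualityFunctor 𝒟₁ 𝒟₂) : DualityFunctor 𝒟₁.neg 𝒟₂.neg where
  F := Φ.F
  additive := Φ.additive
  η := Φ.η
  η_natural := Φ.η_natural
  χ_compat X := by
    have := Φ.additive
    show Φ.F.map (-𝒟₁.χ X) ≫ (Φ.η _).hom ≫ 𝒟₂.map ((Φ.η X).inv) = -𝒟₂.χ (Φ.F.obj X)
    rw [Functor.map_neg, Preadditive.neg_comp, Φ.χ_compat X]

end DFMore

section Misc

open ZeroObject

variable {A : Type u} [Category.{v} A] [Abelian A]

/-- The zero form on the zero object. -/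
noncomputable def zeroForm (𝒟 : PreDuality A) : SymmForm 𝒟 where
  carrier := 0
  form := 0
  symm := by rw [𝒟.map_zero, Limits.comp_zero]

/-- Orthogonal direct sum of a finite list of symmetric forms. -/
noncomputable def orthSumList (𝒟 : PreDuality A) (l : List (SymmForm 𝒟)) : SymmForm 𝒟 :=
  l.foldr SymmForm.orthSum (zeroForm 𝒟)

/-- A Serre class in an abelian category: closed under isomorphisms, subobjects, quotients
and extensions, and containing the zero objects. -/
structure SerreClass (A : Type u) [Category.{v} A] [Abelian A] where
  P : A → Prop
  prop_of_iso : ∀ {X Y : A}, (X ≅ Y) → P X → P Y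
  prop_zero : ∀ X : A, IsZero X → P X
  prop_sub : ∀ {X Y : A} (f : X ⟶ Y), Mono f → P Y → P X
  prop_quot : ∀ {X Y : A} (f : X ⟶ Y), Epi f → P X → P Y
  prop_ext : ∀ {X Y Z : A} (f : X ⟶ Y) (g : Y ⟶ Z) (w : f ≫ g = 0), Mono f → Epi g →
    (CategoryTheory.ShortComplex.mk f g w).Exact → P X → P Z → P Y

/-- The smallest Serre class containing a given object `s`: "the full Serre subcategory
`⟨s⟩` generated by `s`". -/
def serreGen (s : A) : A → Prop := fun x => ∀ C : SerreClass A, C.P s → C.P x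

/-- Self-dual simple objects `s ≅ D s`. -/
abbrev SelfDualSimple (𝒟 : Duality A) : Type u :=
  {s : A // Simple s ∧ Nonempty (s ≅ 𝒟.obj s)}

instance sdSetoid (𝒟 : Duality A) : Setoid (SelfDualSimple 𝒟) where
  r s t := Nonempty (s.1 ≅ t.1)
  iseqv := ⟨fun _ => ⟨Iso.refl _⟩, fun ⟨e⟩ => ⟨e.symm⟩, fun ⟨e⟩ ⟨f⟩ => ⟨e.trans f⟩⟩

/-- Isomorphism classes of self-dual simple objects. -/
def SDIndex (𝒟 : Duality A) : Type u := Quotient (sdSetoid 𝒟)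

/-- The Witt group `W(⟨s⟩)` of the full Serre subcategory generated by `s`. -/
def SubWitt (𝒟 : Duality A) (s : A) : Type (max u v) :=
  WittGroup 𝒟.P SymmForm.Metabolic (serreGen s)

noncomputable instance (𝒟 : Duality A) (s : A) : AddCommGroup (SubWitt 𝒟 s) :=
  inferInstanceAs (AddCommGroup (WittGroup 𝒟.P SymmForm.Metabolic (serreGen s)))

/-- The Witt class in `W(⟨s⟩)`. -/
def subCls (𝒟 : Duality A) (s : A) (β : SymmForm 𝒟.P) (h : IsIso β.form)
    (hP : serreGen s β.carrier) : SubWitt 𝒟 s :=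
  wittClsP 𝒟.P SymmForm.Metabolic (serreGen s) β h hP

/-- A noetherian abelian category: every object satisfies the ascending chain condition
on subobjects. -/
def NoethCat (A : Type u) [Category.{v} A] : Prop :=
  ∀ X : A, WellFounded ((· > ·) : Subobject X → Subobject X → Prop)

end Misc

section AuxMono

open CategoryTheory.Abelian

attribute [local instance] Pseudoelement.objectToSort Pseudoelement.homToFun

/-- If `u` is a mono with `p ≫ u = q`, then the induced map
`cokernel p ⟶ cokernel q` is a mono. -/
lemma mono_cokernel_desc_of_mono {A : Type u} [Category.{v} A] [Abelian A]
    {a k k' : A} (p : a ⟶ k) (q : a ⟶ k') (u : k ⟶ k') (hu : Mono u)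
    (h : p ≫ u = q) (w : p ≫ u ≫ cokernel.π q = 0) :
    Mono (cokernel.desc p (u ≫ cokernel.π q) w) := by
  haveI := hu
  apply Pseudoelement.mono_of_zero_of_map_zero
  intro x hx
  obtain ⟨y, hy⟩ := Pseudoelement.pseudo_surjective_of_epi (cokernel.π p) x
  have hq0 : (cokernel.π q) (u y) = 0 := by
    rw [← Pseudoelement.comp_apply]
    have : u ≫ cokernel.π q = cokernel.π p ≫ cokernel.desc p (u ≫ cokernel.π q) w :=
      (cokernel.π_desc _ _ _).symm
    rw [this, Pseudoelement.comp_apply, hy, hx]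
  have hS : (ShortComplex.mk q (cokernel.π q) (cokernel.condition q)).Exact :=
    ShortComplex.exact_of_g_is_cokernel _ (cokernelIsCokernel q)
  obtain ⟨z, hz⟩ := Pseudoelement.pseudo_exact_of_exact hS (u y) hq0
  have hz' : u (p z) = u y := by
    rw [← Pseudoelement.comp_apply, h]; exact hz
  have hpz : p z = y := Pseudoelement.pseudo_injective_of_mono u hz'
  rw [← hy, ← hpz, ← Pseudoelement.comp_apply, cokernel.condition,
    Pseudoelement.zero_apply]

/-- An associativity/naturality helper computation. -/
lemma duality_comp_helper {A : Type u} [Category.{v} A] [Preadditive A] (𝒟 : PreDuality A)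
    {x bb c kγ : A} (ιβ : x ⟶ bb) (j : bb ⟶ c) (γf : c ⟶ 𝒟.obj c)
    (u : x ⟶ kγ) (ιγ : kγ ⟶ c) (hu : u ≫ ιγ = ιβ ≫ j) :
    ιβ ≫ (j ≫ γf ≫ 𝒟.map j) ≫ 𝒟.map ιβ = u ≫ (ιγ ≫ γf ≫ 𝒟.map ιγ) ≫ 𝒟.map u := by
  have h1 : 𝒟.map j ≫ 𝒟.map ιβ = 𝒟.map ιγ ≫ 𝒟.map u := by
    rw [← 𝒟.map_comp, ← 𝒟.map_comp, hu]
  simp only [Category.assoc]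
  rw [h1, ← Category.assoc ιβ j, ← hu]
  simp only [Category.assoc]

end AuxMono

/-! ## Statement 2
Restriction commutes with isotropic reduction (Lemma "restriction and reduction
commute"): given a symmetric form `γ` on `c`, a subobject `j : b ↪ c` with restricted form
`β = γ|_j`, and a subobject `i : a ↪ b` isotropic for `β` (hence `i ≫ j` is isotropic for
`γ`), there is a monomorphism `j/a : a^⊥_β/a ⟶ a^⊥_γ/a` with `(γ|_j)/a = (γ/a)|_{j/a}`. -/

theorem stmt_2 {A : Type u} [Category.{v} A] [Abelian A] (𝒟 : Duality A)
    (γ : SymmForm 𝒟.P) {b : A} (j : b ⟶ γ.carrier) (hj : Mono j)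
    {a : A} (i : a ⟶ b) (hi : Mono i)
    (hiso : i ≫ (γ.restrict j).form ≫ 𝒟.P.map i = 0)
    (hiso' : (i ≫ j) ≫ γ.form ≫ 𝒟.P.map (i ≫ j) = 0) :
    ∃ m : ((γ.restrict j).reduce i hiso).carrier ⟶ (γ.reduce (i ≫ j) hiso').carrier,
      Mono m ∧
        ((γ.restrict j).reduce i hiso).form
          = m ≫ (γ.reduce (i ≫ j) hiso').form ≫ 𝒟.P.map m := by
  haveI := hj
  haveI := hi
  set β := γ.restrict j with hβdef
  have hβform : β.form = j ≫ γ.form ≫ 𝒟.P.map j := rfl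
  -- the comparison map between orthogonal complements
  have hkform : β.form ≫ 𝒟.P.map i = j ≫ γ.form ≫ 𝒟.P.map (i ≫ j) := by
    rw [hβform, 𝒟.P.map_comp]
    exact (Category.assoc _ _ _).trans (congrArg (j ≫ ·) (Category.assoc _ _ _))
  have hker : (kernel.ι (β.form ≫ 𝒟.P.map i) ≫ j) ≫ γ.form ≫ 𝒟.P.map (i ≫ j) = 0 := by
    exact (Category.assoc _ _ _).trans ((congrArg (kernel.ι (β.form ≫ 𝒟.P.map i) ≫ ·)
      hkform.symm).trans (kernel.condition _))
  let u : kernel (β.form ≫ 𝒟.P.map i) ⟶ kernel (γ.form ≫ 𝒟.P.map (i ≫ j)) :=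
    kernel.lift _ _ hker
  have hu : u ≫ kernel.ι (γ.form ≫ 𝒟.P.map (i ≫ j)) = kernel.ι (β.form ≫ 𝒟.P.map i) ≫ j :=
    kernel.lift_ι _ _ _
  have humono : Mono u := by
    have : Mono (u ≫ kernel.ι (γ.form ≫ 𝒟.P.map (i ≫ j))) := by
      rw [hu]; exact mono_comp' inferInstance hj
    exact mono_of_mono u (kernel.ι (γ.form ≫ 𝒟.P.map (i ≫ j)))
  have hcomm : SymmForm.perpLift β i hiso ≫ u = SymmForm.perpLift γ (i ≫ j) hiso' := by
    rw [← cancel_mono (kernel.ι (γ.form ≫ 𝒟.P.map (i ≫ j))), Category.assoc, hu]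
    exact (Category.assoc _ _ _).symm.trans ((congrArg (· ≫ j) (SymmForm.perpLift_ι β i hiso)).trans
      (SymmForm.perpLift_ι γ (i ≫ j) hiso').symm)
  have w : SymmForm.perpLift β i hiso ≫ u ≫ cokernel.π (SymmForm.perpLift γ (i ≫ j) hiso') = 0 := by
    rw [← Category.assoc, hcomm, cokernel.condition]
  refine ⟨cokernel.desc _ _ w, mono_cokernel_desc_of_mono _ _ u humono hcomm w, ?_⟩
  set m := cokernel.desc (SymmForm.perpLift β i hiso)
    (u ≫ cokernel.π (SymmForm.perpLift γ (i ≫ j) hiso')) w with hmdef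
  set πβ := cokernel.π (SymmForm.perpLift β i hiso) with hπβ
  set πγ := cokernel.π (SymmForm.perpLift γ (i ≫ j) hiso') with hπγ
  have hπm : πβ ≫ m = u ≫ πγ := cokernel.π_desc _ _ _
  -- defining properties of the reduced forms
  have hφβ : (β.reduce i hiso).form ≫ 𝒟.P.map πβ = SymmForm.reducePre β i hiso :=
    (KernelFork.IsLimit.lift' (𝒟.dualCokernelIsKernel (SymmForm.perpLift β i hiso))
      (SymmForm.reducePre β i hiso) (SymmForm.reduce_h2 β i hiso)).2
  have hφγ : (γ.reduce (i ≫ j) hiso').form ≫ 𝒟.P.map πγ = SymmForm.reducePre γ (i ≫ j) hiso' :=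
    (KernelFork.IsLimit.lift' (𝒟.dualCokernelIsKernel (SymmForm.perpLift γ (i ≫ j) hiso'))
      (SymmForm.reducePre γ (i ≫ j) hiso') (SymmForm.reduce_h2 γ (i ≫ j) hiso')).2
  have hπβmono : Mono (𝒟.P.map πβ) :=
    mono_of_isLimit_fork (𝒟.dualCokernelIsKernel (SymmForm.perpLift β i hiso))
  erw [← cancel_mono (𝒟.P.map πβ), hφβ]
  have hDm : 𝒟.P.map m ≫ 𝒟.P.map πβ = 𝒟.P.map πγ ≫ 𝒟.P.map u := by
    rw [← 𝒟.P.map_comp, hπm]; exact 𝒟.P.map_comp u πγ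
  refine (cancel_epi πβ).1 ?_
  have hred : πβ ≫ SymmForm.reducePre β i hiso
      = kernel.ι (β.form ≫ 𝒟.P.map i) ≫ β.form ≫ 𝒟.P.map (kernel.ι (β.form ≫ 𝒟.P.map i)) :=
    cokernel.π_desc _ _ _
  have hred' : πγ ≫ SymmForm.reducePre γ (i ≫ j) hiso'
      = kernel.ι (γ.form ≫ 𝒟.P.map (i ≫ j)) ≫ γ.form ≫
          𝒟.P.map (kernel.ι (γ.form ≫ 𝒟.P.map (i ≫ j))) :=
    cokernel.π_desc _ _ _
  calc πβ ≫ SymmForm.reducePre β i hiso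
      = kernel.ι (β.form ≫ 𝒟.P.map i) ≫ (j ≫ γ.form ≫ 𝒟.P.map j) ≫
          𝒟.P.map (kernel.ι (β.form ≫ 𝒟.P.map i)) := hred
    _ = u ≫ (kernel.ι (γ.form ≫ 𝒟.P.map (i ≫ j)) ≫ γ.form ≫
          𝒟.P.map (kernel.ι (γ.form ≫ 𝒟.P.map (i ≫ j)))) ≫ 𝒟.P.map u :=
      duality_comp_helper 𝒟.P (kernel.ι (β.form ≫ 𝒟.P.map i)) j γ.form u
        (kernel.ι (γ.form ≫ 𝒟.P.map (i ≫ j))) hu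
    _ = u ≫ (πγ ≫ SymmForm.reducePre γ (i ≫ j) hiso') ≫ 𝒟.P.map u :=
      congrArg (fun t => u ≫ t ≫ 𝒟.P.map u) hred'.symm
    _ = u ≫ (πγ ≫ (γ.reduce (i ≫ j) hiso').form ≫ 𝒟.P.map πγ) ≫ 𝒟.P.map u :=
      congrArg (fun t => u ≫ (πγ ≫ t) ≫ 𝒟.P.map u) hφγ.symm
    _ = (u ≫ πγ) ≫ (γ.reduce (i ≫ j) hiso').form ≫ (𝒟.P.map πγ ≫ 𝒟.P.map u) := by
      simp only [Category.assoc]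
      exact congrArg (fun t => u ≫ πγ ≫ t) (Category.assoc _ _ _)
    _ = (πβ ≫ m) ≫ (γ.reduce (i ≫ j) hiso').form ≫ (𝒟.P.map m ≫ 𝒟.P.map πβ) :=
      congrArg₂ (fun s t => s ≫ (γ.reduce (i ≫ j) hiso').form ≫ t) hπm.symm hDm.symm
    _ = πβ ≫ (m ≫ (γ.reduce (i ≫ j) hiso').form ≫ 𝒟.P.map m) ≫ 𝒟.P.map πβ := by
      simp only [Category.assoc]
      exact congrArg (fun t => πβ ≫ m ≫ t) (Category.assoc _ _ _).symm
end

section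
/- Let (A, D, χ) be an abelian category with exact duality, β : b → Db a symmetric form, and i : a ↪ b an isotropic subobject for β. Let ā denote the image of the composite a ↪ b ↠ im β. Then there is an isometry overline(β/a) ≅ (β̄)/ā; that is, the non-degenerate form induced on the image of the isotropic reduction β/a is isometric to the isotropic reduction of the non-degenerate form β̄ on im β by the isotropic subobject ā. -/
open CategoryTheory CategoryTheory.Limits

universe v u v₁ u₁ v₂ u₂ v₃ u₃

attribute [reducible] SymmForm.reduce
attribute [reducible] SymmForm.reduceKernel

section Stmt3Aux

open CategoryTheory.Abelian CategoryTheory.Preadditive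

variable {A : Type u} [Category.{v} A] [Abelian A] (𝒟 : Duality A)

lemma Stmt3.mapIsIso {X Y : A} (f : X ⟶ Y) [IsIso f] : IsIso (𝒟.P.map f) :=
  ⟨𝒟.P.map (inv f), by rw [← 𝒟.P.map_comp, IsIso.inv_hom_id, 𝒟.P.map_id],
    by rw [← 𝒟.P.map_comp, IsIso.hom_inv_id, 𝒟.P.map_id]⟩

lemma Stmt3.mapMonoOfEpi {X Y : A} (f : X ⟶ Y) [Epi f] : Mono (𝒟.P.map f) := by
  apply mono_of_cancel_zero
  intro Z u hu
  obtain ⟨l, hl⟩ := KernelFork.IsLimit.lift' (𝒟.dualCokernelIsKernel f) u hu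
  rw [Fork.ι_ofι] at hl
  have hπ : 𝒟.P.map (cokernel.π f) = 0 := by
    rw [cokernel.π_of_epi, 𝒟.P.map_zero]
  have h0 : l ≫ 𝒟.P.map (cokernel.π f) = l ≫ 0 := congrArg (fun x => l ≫ x) hπ
  rw [Limits.comp_zero] at h0
  exact hl.symm.trans h0

lemma Stmt3.reduce_char (β : SymmForm 𝒟.P) {a : A} (i : a ⟶ β.carrier)
    (hiso : i ≫ β.form ≫ 𝒟.P.map i = 0) :
    cokernel.π (β.perpLift i hiso) ≫ (β.reduce i hiso).form ≫
      𝒟.P.map (cokernel.π (β.perpLift i hiso)) =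
    kernel.ι (β.form ≫ 𝒟.P.map i) ≫ β.form ≫ 𝒟.P.map (kernel.ι (β.form ≫ 𝒟.P.map i)) := by
  have h2 : (β.reduce i hiso).form ≫ 𝒟.P.map (cokernel.π (β.perpLift i hiso)) =
      SymmForm.reducePre β i hiso :=
    (KernelFork.IsLimit.lift' (𝒟.dualCokernelIsKernel (β.perpLift i hiso))
      (SymmForm.reducePre β i hiso) (SymmForm.reduce_h2 β i hiso)).2
  rw [h2]
  exact cokernel.π_desc _ _ _

lemma Stmt3.form_kernel_isotropic (β : SymmForm 𝒟.P) :
    kernel.ι β.form ≫ β.form ≫ 𝒟.P.map (kernel.ι β.form) = 0 := by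
  rw [← Category.assoc, kernel.condition, Limits.zero_comp]

end Stmt3Aux

namespace Stmt3

variable {A : Type u} [Category.{v} A] [Abelian A] (𝒟 : Duality A)
variable (β : SymmForm 𝒟.P) {a : A} (i : a ⟶ β.carrier)

/-- The inverse of the kernel inclusion `K₃ = ker (0) ⟶ b`. -/
noncomputable def tmap : β.carrier ⟶ kernel (β.form ≫ 𝒟.P.map (kernel.ι β.form)) :=
  kernel.lift _ (𝟙 _) (by rw [Category.id_comp]; exact β.form_comp_map_kernel)

lemma tmap_ι : tmap 𝒟 β ≫ kernel.ι (β.form ≫ 𝒟.P.map (kernel.ι β.form)) = 𝟙 _ :=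
  kernel.lift_ι _ _ _

/-- The projection `K₃ ⟶ im β`. -/
noncomputable def pi3 : kernel (β.form ≫ 𝒟.P.map (kernel.ι β.form)) ⟶ β.reduceKernel.carrier :=
  cokernel.π (β.perpLift (kernel.ι β.form) (form_kernel_isotropic 𝒟 β))

lemma kerQuot_eq : β.kerQuot = tmap 𝒟 β ≫ pi3 𝒟 β := rfl

lemma isIso_tmap : IsIso (tmap 𝒟 β) :=
  ⟨kernel.ι _, tmap_ι 𝒟 β, by
    rw [← cancel_mono (kernel.ι (β.form ≫ 𝒟.P.map (kernel.ι β.form))), Category.assoc,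
      tmap_ι, Category.comp_id, Category.id_comp]⟩

lemma epi_kerQuot : Epi β.kerQuot := by
  rw [kerQuot_eq]
  haveI := isIso_tmap 𝒟 β
  haveI : Epi (pi3 𝒟 β) := by unfold pi3; infer_instance
  apply epi_comp

lemma char3 : pi3 𝒟 β ≫ β.reduceKernel.form ≫ 𝒟.P.map (pi3 𝒟 β) =
    kernel.ι (β.form ≫ 𝒟.P.map (kernel.ι β.form)) ≫ β.form ≫
      𝒟.P.map (kernel.ι (β.form ≫ 𝒟.P.map (kernel.ι β.form))) :=
  reduce_char 𝒟 β (kernel.ι β.form) (form_kernel_isotropic 𝒟 β)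

lemma c7 : β.kerQuot ≫ β.reduceKernel.form ≫ 𝒟.P.map β.kerQuot = β.form := by
  rw [kerQuot_eq, 𝒟.P.map_comp]
  simp only [Category.assoc]
  rw [reassoc_of% (char3 𝒟 β), ← Category.assoc, tmap_ι, Category.id_comp,
    ← 𝒟.P.map_comp, tmap_ι, 𝒟.P.map_id, Category.comp_id]

lemma c5 : kernel.ι β.form ≫ β.kerQuot = 0 := by
  have h : kernel.ι β.form ≫ tmap 𝒟 β =
      β.perpLift (kernel.ι β.form) (form_kernel_isotropic 𝒟 β) := by
    rw [← cancel_mono (kernel.ι (β.form ≫ 𝒟.P.map (kernel.ι β.form))), Category.assoc,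
      tmap_ι, Category.comp_id, SymmForm.perpLift_ι]
  rw [kerQuot_eq, ← Category.assoc, h]
  exact cokernel.condition _

lemma c8 : β.kerQuot ≫ β.reduceKernel.form ≫ 𝒟.P.map (image.ι (i ≫ β.kerQuot)) ≫
    𝒟.P.map (factorThruImage (i ≫ β.kerQuot)) = β.form ≫ 𝒟.P.map i := by
  have hD : 𝒟.P.map (image.ι (i ≫ β.kerQuot)) ≫ 𝒟.P.map (factorThruImage (i ≫ β.kerQuot)) =
      𝒟.P.map β.kerQuot ≫ 𝒟.P.map i := by
    rw [← 𝒟.P.map_comp, image.fac, 𝒟.P.map_comp]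
  rw [hD, reassoc_of% (c7 𝒟 β)]

lemma e1 : i ≫ β.form = 𝒟.P.χ a ≫ 𝒟.P.map (β.form ≫ 𝒟.P.map i) := by
  conv_lhs => rw [β.symm]
  rw [← Category.assoc, 𝒟.P.χ_natural i, Category.assoc, ← 𝒟.P.map_comp]

lemma c9 : i ≫ β.form ≫ 𝒟.P.map (kernel.ι (β.form ≫ 𝒟.P.map i)) = 0 := by
  rw [← Category.assoc, e1, Category.assoc, ← 𝒟.P.map_comp, kernel.condition,
    𝒟.P.map_zero, Limits.comp_zero]

/-- The induced map `a^⊥ ⟶ ā^⊥`. -/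
noncomputable def vmap : kernel (β.form ≫ 𝒟.P.map i) ⟶
    kernel (β.reduceKernel.form ≫ 𝒟.P.map (image.ι (i ≫ β.kerQuot))) :=
  kernel.lift _ (kernel.ι (β.form ≫ 𝒟.P.map i) ≫ β.kerQuot) (by
    haveI : Mono (𝒟.P.map (factorThruImage (i ≫ β.kerQuot))) := mapMonoOfEpi 𝒟 _
    rw [← cancel_mono (𝒟.P.map (factorThruImage (i ≫ β.kerQuot))), Limits.zero_comp]
    simp only [Category.assoc]
    rw [c8]
    exact kernel.condition _)

lemma vmap_ι : vmap 𝒟 β i ≫ kernel.ι (β.reduceKernel.form ≫ 𝒟.P.map (image.ι (i ≫ β.kerQuot)))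
    = kernel.ι (β.form ≫ 𝒟.P.map i) ≫ β.kerQuot :=
  kernel.lift_ι _ _ _

variable (hiso : i ≫ β.form ≫ 𝒟.P.map i = 0)
  (hiso' : image.ι (i ≫ β.kerQuot) ≫ β.reduceKernel.form ≫
    𝒟.P.map (image.ι (i ≫ β.kerQuot)) = 0)

lemma hp1v : β.perpLift i hiso ≫ vmap 𝒟 β i =
    factorThruImage (i ≫ β.kerQuot) ≫
      β.reduceKernel.perpLift (image.ι (i ≫ β.kerQuot)) hiso' := by
  have hL : (β.perpLift i hiso ≫ vmap 𝒟 β i) ≫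
      kernel.ι (β.reduceKernel.form ≫ 𝒟.P.map (image.ι (i ≫ β.kerQuot))) = i ≫ β.kerQuot := by
    rw [Category.assoc, vmap_ι, ← Category.assoc, SymmForm.perpLift_ι]
  have hR : (factorThruImage (i ≫ β.kerQuot) ≫
      β.reduceKernel.perpLift (image.ι (i ≫ β.kerQuot)) hiso') ≫
      kernel.ι (β.reduceKernel.form ≫ 𝒟.P.map (image.ι (i ≫ β.kerQuot))) = i ≫ β.kerQuot := by
    rw [Category.assoc, SymmForm.perpLift_ι, image.fac]
  exact (cancel_mono _).1 (hL.trans hR.symm)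

/-- The induced map `a^⊥/a ⟶ ā^⊥/ā`. -/
noncomputable def gmap : (β.reduce i hiso).carrier ⟶
    (β.reduceKernel.reduce (image.ι (i ≫ β.kerQuot)) hiso').carrier :=
  cokernel.desc (β.perpLift i hiso)
    (vmap 𝒟 β i ≫ cokernel.π (β.reduceKernel.perpLift (image.ι (i ≫ β.kerQuot)) hiso'))
    (by rw [← Category.assoc, hp1v 𝒟 β i hiso hiso', Category.assoc, cokernel.condition,
          Limits.comp_zero])

lemma gmap_fac : cokernel.π (β.perpLift i hiso) ≫ gmap 𝒟 β i hiso hiso' =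
    vmap 𝒟 β i ≫ cokernel.π (β.reduceKernel.perpLift (image.ι (i ≫ β.kerQuot)) hiso') :=
  cokernel.π_desc _ _ _

end Stmt3

section Stmt3Chase

open Pseudoelement

namespace Stmt3

variable {A : Type u} [Category.{v} A] [Abelian A] (𝒟 : Duality A)
variable (β : SymmForm 𝒟.P) {a : A} (i : a ⟶ β.carrier)
  (hiso : i ≫ β.form ≫ 𝒟.P.map i = 0)
  (hiso' : image.ι (i ≫ β.kerQuot) ≫ β.reduceKernel.form ≫
    𝒟.P.map (image.ι (i ≫ β.kerQuot)) = 0)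

lemma hexD : (ShortComplex.mk (𝒟.P.map (β.form ≫ 𝒟.P.map i))
    (𝒟.P.map (kernel.ι (β.form ≫ 𝒟.P.map i)))
    (by rw [← 𝒟.P.map_comp, kernel.condition, 𝒟.P.map_zero])).Exact :=
  ShortComplex.exact_of_g_is_cokernel _ (𝒟.dualKernelIsCokernel (β.form ≫ 𝒟.P.map i))

lemma ker_gmap : kernel.ι (β.reduce i hiso).form ≫ gmap 𝒟 β i hiso hiso' = 0 := by
  have c1 := reduce_char 𝒟 β i hiso
  apply Abelian.Pseudoelement.zero_morphism_ext
  intro x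
  rw [Abelian.Pseudoelement.comp_apply]
  obtain ⟨y, hy⟩ := Abelian.Pseudoelement.pseudo_surjective_of_epi
    (cokernel.π (β.perpLift i hiso)) ((kernel.ι (β.reduce i hiso).form) x)
  -- `(F ≫ D κ₁) (κ₁ y) = 0`
  have hz1 : (𝒟.P.map (kernel.ι (β.form ≫ 𝒟.P.map i)))
      (β.form ((kernel.ι (β.form ≫ 𝒟.P.map i)) y)) = 0 := by
    calc (𝒟.P.map (kernel.ι (β.form ≫ 𝒟.P.map i)))
          (β.form ((kernel.ι (β.form ≫ 𝒟.P.map i)) y))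
        = (β.form ≫ 𝒟.P.map (kernel.ι (β.form ≫ 𝒟.P.map i)))
            ((kernel.ι (β.form ≫ 𝒟.P.map i)) y) :=
          (Abelian.Pseudoelement.comp_apply _ _ _).symm
      _ = (kernel.ι (β.form ≫ 𝒟.P.map i) ≫ β.form ≫
            𝒟.P.map (kernel.ι (β.form ≫ 𝒟.P.map i))) y :=
          (Abelian.Pseudoelement.comp_apply _ _ _).symm
      _ = (cokernel.π (β.perpLift i hiso) ≫ (β.reduce i hiso).form ≫
            𝒟.P.map (cokernel.π (β.perpLift i hiso))) y := by rw [c1]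
      _ = ((β.reduce i hiso).form ≫ 𝒟.P.map (cokernel.π (β.perpLift i hiso)))
            ((cokernel.π (β.perpLift i hiso)) y) := Abelian.Pseudoelement.comp_apply _ _ _
      _ = ((β.reduce i hiso).form ≫ 𝒟.P.map (cokernel.π (β.perpLift i hiso)))
            ((kernel.ι (β.reduce i hiso).form) x) := by rw [hy]
      _ = (kernel.ι (β.reduce i hiso).form ≫ (β.reduce i hiso).form ≫
            𝒟.P.map (cokernel.π (β.perpLift i hiso))) x :=
          (Abelian.Pseudoelement.comp_apply _ _ _).symm
      _ = 0 := by
          rw [← Category.assoc, kernel.condition, Limits.zero_comp,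
            Abelian.Pseudoelement.zero_apply]
  obtain ⟨ξ, hξ⟩ := Abelian.Pseudoelement.pseudo_exact_of_exact (hexD 𝒟 β i)
    (β.form ((kernel.ι (β.form ≫ 𝒟.P.map i)) y)) hz1
  haveI : IsIso (𝒟.P.χ a) := 𝒟.P.χ_iso a
  obtain ⟨ξ', hξ'⟩ := Abelian.Pseudoelement.pseudo_surjective_of_epi (𝒟.P.χ a) ξ
  have hiF : β.form ((kernel.ι (β.form ≫ 𝒟.P.map i)) y) = β.form (i ξ') := by
    calc β.form ((kernel.ι (β.form ≫ 𝒟.P.map i)) y)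
        = (𝒟.P.map (β.form ≫ 𝒟.P.map i)) ξ := hξ.symm
      _ = (𝒟.P.map (β.form ≫ 𝒟.P.map i)) ((𝒟.P.χ a) ξ') := by rw [hξ']
      _ = (𝒟.P.χ a ≫ 𝒟.P.map (β.form ≫ 𝒟.P.map i)) ξ' :=
          (Abelian.Pseudoelement.comp_apply _ _ _).symm
      _ = (i ≫ β.form) ξ' := by rw [← e1 𝒟 β i]
      _ = β.form (i ξ') := Abelian.Pseudoelement.comp_apply _ _ _
  obtain ⟨w, hw0, hwg⟩ := Abelian.Pseudoelement.sub_of_eq_image β.form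
    ((kernel.ι (β.form ≫ 𝒟.P.map i)) y) (i ξ') hiF
  have hwq : β.kerQuot w = 0 := by
    obtain ⟨w₀, hw₀⟩ := Abelian.Pseudoelement.pseudo_exact_of_exact
      (ShortComplex.exact_kernel β.form) w hw0
    calc β.kerQuot w = β.kerQuot ((kernel.ι β.form) w₀) := by rw [hw₀]
      _ = (kernel.ι β.form ≫ β.kerQuot) w₀ := (Abelian.Pseudoelement.comp_apply _ _ _).symm
      _ = 0 := by rw [c5 𝒟 β, Abelian.Pseudoelement.zero_apply]
  have hginj : (β.kerQuot ≫ cokernel.π (image.ι (i ≫ β.kerQuot))) (i ξ') = 0 := by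
    have cm : i ≫ β.kerQuot ≫ cokernel.π (image.ι (i ≫ β.kerQuot)) = 0 := by
      calc i ≫ β.kerQuot ≫ cokernel.π (image.ι (i ≫ β.kerQuot))
          = (i ≫ β.kerQuot) ≫ cokernel.π (image.ι (i ≫ β.kerQuot)) :=
            (Category.assoc _ _ _).symm
        _ = (factorThruImage (i ≫ β.kerQuot) ≫ image.ι (i ≫ β.kerQuot)) ≫
              cokernel.π (image.ι (i ≫ β.kerQuot)) :=
            congrArg (fun h => h ≫ cokernel.π (image.ι (i ≫ β.kerQuot))) (image.fac _).symm
        _ = factorThruImage (i ≫ β.kerQuot) ≫ image.ι (i ≫ β.kerQuot) ≫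
              cokernel.π (image.ι (i ≫ β.kerQuot)) := Category.assoc _ _ _
        _ = 0 := by rw [cokernel.condition, Limits.comp_zero]
    calc (β.kerQuot ≫ cokernel.π (image.ι (i ≫ β.kerQuot))) (i ξ')
        = (i ≫ β.kerQuot ≫ cokernel.π (image.ι (i ≫ β.kerQuot))) ξ' :=
          (Abelian.Pseudoelement.comp_apply _ _ _).symm
      _ = 0 := by rw [cm, Abelian.Pseudoelement.zero_apply]
  have hcj := hwg _ (β.kerQuot ≫ cokernel.π (image.ι (i ≫ β.kerQuot))) hginj
  have hcj2 : (cokernel.π (image.ι (i ≫ β.kerQuot)))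
      (β.kerQuot ((kernel.ι (β.form ≫ 𝒟.P.map i)) y)) = 0 := by
    calc (cokernel.π (image.ι (i ≫ β.kerQuot)))
          (β.kerQuot ((kernel.ι (β.form ≫ 𝒟.P.map i)) y))
        = (β.kerQuot ≫ cokernel.π (image.ι (i ≫ β.kerQuot)))
            ((kernel.ι (β.form ≫ 𝒟.P.map i)) y) :=
          (Abelian.Pseudoelement.comp_apply _ _ _).symm
      _ = (β.kerQuot ≫ cokernel.π (image.ι (i ≫ β.kerQuot))) w := hcj.symm
      _ = (cokernel.π (image.ι (i ≫ β.kerQuot))) (β.kerQuot w) :=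
          Abelian.Pseudoelement.comp_apply _ _ _
      _ = 0 := by rw [hwq, Abelian.Pseudoelement.apply_zero]
  obtain ⟨z₁, hz₁⟩ := Abelian.Pseudoelement.pseudo_exact_of_exact
    (ShortComplex.exact_cokernel (image.ι (i ≫ β.kerQuot)))
    (β.kerQuot ((kernel.ι (β.form ≫ 𝒟.P.map i)) y)) hcj2
  have hvy : (β.reduceKernel.perpLift (image.ι (i ≫ β.kerQuot)) hiso') z₁
      = (vmap 𝒟 β i) y := by
    apply Abelian.Pseudoelement.pseudo_injective_of_mono
      (kernel.ι (β.reduceKernel.form ≫ 𝒟.P.map (image.ι (i ≫ β.kerQuot))))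
    calc (kernel.ι (β.reduceKernel.form ≫ 𝒟.P.map (image.ι (i ≫ β.kerQuot))))
          ((β.reduceKernel.perpLift (image.ι (i ≫ β.kerQuot)) hiso') z₁)
        = (β.reduceKernel.perpLift (image.ι (i ≫ β.kerQuot)) hiso' ≫
            kernel.ι (β.reduceKernel.form ≫ 𝒟.P.map (image.ι (i ≫ β.kerQuot)))) z₁ :=
          (Abelian.Pseudoelement.comp_apply _ _ _).symm
      _ = (image.ι (i ≫ β.kerQuot)) z₁ := by rw [SymmForm.perpLift_ι]
      _ = β.kerQuot ((kernel.ι (β.form ≫ 𝒟.P.map i)) y) := hz₁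
      _ = (kernel.ι (β.form ≫ 𝒟.P.map i) ≫ β.kerQuot) y :=
          (Abelian.Pseudoelement.comp_apply _ _ _).symm
      _ = (vmap 𝒟 β i ≫
            kernel.ι (β.reduceKernel.form ≫ 𝒟.P.map (image.ι (i ≫ β.kerQuot)))) y := by
          rw [vmap_ι]
      _ = (kernel.ι (β.reduceKernel.form ≫ 𝒟.P.map (image.ι (i ≫ β.kerQuot))))
            ((vmap 𝒟 β i) y) := Abelian.Pseudoelement.comp_apply _ _ _
  calc (gmap 𝒟 β i hiso hiso') ((kernel.ι (β.reduce i hiso).form) x)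
      = (gmap 𝒟 β i hiso hiso') ((cokernel.π (β.perpLift i hiso)) y) := by rw [hy]
    _ = (cokernel.π (β.perpLift i hiso) ≫ gmap 𝒟 β i hiso hiso') y :=
        (Abelian.Pseudoelement.comp_apply _ _ _).symm
    _ = (vmap 𝒟 β i ≫
          cokernel.π (β.reduceKernel.perpLift (image.ι (i ≫ β.kerQuot)) hiso')) y := by
        rw [gmap_fac 𝒟 β i hiso hiso']
    _ = (cokernel.π (β.reduceKernel.perpLift (image.ι (i ≫ β.kerQuot)) hiso'))
          ((vmap 𝒟 β i) y) := Abelian.Pseudoelement.comp_apply _ _ _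
    _ = (cokernel.π (β.reduceKernel.perpLift (image.ι (i ≫ β.kerQuot)) hiso'))
          ((β.reduceKernel.perpLift (image.ι (i ≫ β.kerQuot)) hiso') z₁) := by rw [hvy]
    _ = (β.reduceKernel.perpLift (image.ι (i ≫ β.kerQuot)) hiso' ≫
          cokernel.π (β.reduceKernel.perpLift (image.ι (i ≫ β.kerQuot)) hiso')) z₁ :=
        (Abelian.Pseudoelement.comp_apply _ _ _).symm
    _ = 0 := by rw [cokernel.condition, Abelian.Pseudoelement.zero_apply]

end Stmt3

end Stmt3Chase

section Stmt3Final

open Pseudoelement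

namespace Stmt3

variable {A : Type u} [Category.{v} A] [Abelian A] (𝒟 : Duality A)
variable (β : SymmForm 𝒟.P) {a : A} (i : a ⟶ β.carrier)
  (hiso : i ≫ β.form ≫ 𝒟.P.map i = 0)
  (hiso' : image.ι (i ≫ β.kerQuot) ≫ β.reduceKernel.form ≫
    𝒟.P.map (image.ι (i ≫ β.kerQuot)) = 0)

lemma isIso_iota2 : IsIso (kernel.ι ((β.reduce i hiso).form ≫
    𝒟.P.map (kernel.ι (β.reduce i hiso).form))) := by
  obtain ⟨u, hu⟩ : ∃ u, u ≫ kernel.ι ((β.reduce i hiso).form ≫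
      𝒟.P.map (kernel.ι (β.reduce i hiso).form)) = 𝟙 (β.reduce i hiso).carrier :=
    ⟨kernel.lift _ (𝟙 _)
      (by rw [Category.id_comp]; exact (β.reduce i hiso).form_comp_map_kernel),
      kernel.lift_ι _ _ _⟩
  refine ⟨u, ?_, hu⟩
  rw [← cancel_mono (kernel.ι ((β.reduce i hiso).form ≫
    𝒟.P.map (kernel.ι (β.reduce i hiso).form))), Category.assoc, hu, Category.comp_id,
    Category.id_comp]

/-- The comparison map between the two double reductions. -/
noncomputable def fmap : (β.reduce i hiso).reduceKernel.carrier ⟶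
    (β.reduceKernel.reduce (image.ι (i ≫ β.kerQuot)) hiso').carrier :=
  cokernel.desc ((β.reduce i hiso).perpLift (kernel.ι (β.reduce i hiso).form)
      (form_kernel_isotropic 𝒟 (β.reduce i hiso)))
    (kernel.ι ((β.reduce i hiso).form ≫ 𝒟.P.map (kernel.ι (β.reduce i hiso).form)) ≫
      gmap 𝒟 β i hiso hiso')
    (by rw [← Category.assoc, SymmForm.perpLift_ι, ker_gmap 𝒟 β i hiso hiso'])

lemma fmap_fac : cokernel.π ((β.reduce i hiso).perpLift (kernel.ι (β.reduce i hiso).form)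
      (form_kernel_isotropic 𝒟 (β.reduce i hiso))) ≫ fmap 𝒟 β i hiso hiso' =
    kernel.ι ((β.reduce i hiso).form ≫ 𝒟.P.map (kernel.ι (β.reduce i hiso).form)) ≫
      gmap 𝒟 β i hiso hiso' :=
  cokernel.π_desc _ _ _

lemma mono_fmap : Mono (fmap 𝒟 β i hiso hiso') := by
  apply Abelian.Pseudoelement.mono_of_zero_of_map_zero
  intro x hx
  obtain ⟨x₂, hx₂⟩ := Abelian.Pseudoelement.pseudo_surjective_of_epi
    (cokernel.π ((β.reduce i hiso).perpLift (kernel.ι (β.reduce i hiso).form)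
      (form_kernel_isotropic 𝒟 (β.reduce i hiso)))) x
  obtain ⟨y, hy⟩ := Abelian.Pseudoelement.pseudo_surjective_of_epi
    (cokernel.π (β.perpLift i hiso))
    ((kernel.ι ((β.reduce i hiso).form ≫ 𝒟.P.map (kernel.ι (β.reduce i hiso).form))) x₂)
  have h1 : (cokernel.π (β.reduceKernel.perpLift (image.ι (i ≫ β.kerQuot)) hiso'))
      ((vmap 𝒟 β i) y) = 0 := by
    calc (cokernel.π (β.reduceKernel.perpLift (image.ι (i ≫ β.kerQuot)) hiso'))
          ((vmap 𝒟 β i) y)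
        = (vmap 𝒟 β i ≫
            cokernel.π (β.reduceKernel.perpLift (image.ι (i ≫ β.kerQuot)) hiso')) y :=
          (Abelian.Pseudoelement.comp_apply _ _ _).symm
      _ = (cokernel.π (β.perpLift i hiso) ≫ gmap 𝒟 β i hiso hiso') y := by
          rw [← gmap_fac 𝒟 β i hiso hiso']
      _ = (gmap 𝒟 β i hiso hiso') ((cokernel.π (β.perpLift i hiso)) y) :=
          Abelian.Pseudoelement.comp_apply _ _ _
      _ = (gmap 𝒟 β i hiso hiso')
            ((kernel.ι ((β.reduce i hiso).form ≫
              𝒟.P.map (kernel.ι (β.reduce i hiso).form))) x₂) := by rw [hy]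
      _ = (kernel.ι ((β.reduce i hiso).form ≫
              𝒟.P.map (kernel.ι (β.reduce i hiso).form)) ≫ gmap 𝒟 β i hiso hiso') x₂ :=
          (Abelian.Pseudoelement.comp_apply _ _ _).symm
      _ = (cokernel.π ((β.reduce i hiso).perpLift (kernel.ι (β.reduce i hiso).form)
            (form_kernel_isotropic 𝒟 (β.reduce i hiso))) ≫ fmap 𝒟 β i hiso hiso') x₂ := by
          rw [fmap_fac 𝒟 β i hiso hiso']
      _ = (fmap 𝒟 β i hiso hiso')
            ((cokernel.π ((β.reduce i hiso).perpLift (kernel.ι (β.reduce i hiso).form)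
              (form_kernel_isotropic 𝒟 (β.reduce i hiso)))) x₂) :=
          Abelian.Pseudoelement.comp_apply _ _ _
      _ = (fmap 𝒟 β i hiso hiso') x := by rw [hx₂]
      _ = 0 := hx
  obtain ⟨z, hz⟩ := Abelian.Pseudoelement.pseudo_exact_of_exact
    (ShortComplex.exact_cokernel (β.reduceKernel.perpLift (image.ι (i ≫ β.kerQuot)) hiso'))
    ((vmap 𝒟 β i) y) h1
  obtain ⟨ξ', hξ'⟩ := Abelian.Pseudoelement.pseudo_surjective_of_epi
    (factorThruImage (i ≫ β.kerQuot)) z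
  have hkq : β.kerQuot ((kernel.ι (β.form ≫ 𝒟.P.map i)) y) = β.kerQuot (i ξ') := by
    calc β.kerQuot ((kernel.ι (β.form ≫ 𝒟.P.map i)) y)
        = (kernel.ι (β.form ≫ 𝒟.P.map i) ≫ β.kerQuot) y :=
          (Abelian.Pseudoelement.comp_apply _ _ _).symm
      _ = (vmap 𝒟 β i ≫ kernel.ι (β.reduceKernel.form ≫
            𝒟.P.map (image.ι (i ≫ β.kerQuot)))) y := by rw [vmap_ι]
      _ = (kernel.ι (β.reduceKernel.form ≫ 𝒟.P.map (image.ι (i ≫ β.kerQuot))))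
            ((vmap 𝒟 β i) y) := Abelian.Pseudoelement.comp_apply _ _ _
      _ = (kernel.ι (β.reduceKernel.form ≫ 𝒟.P.map (image.ι (i ≫ β.kerQuot))))
            ((β.reduceKernel.perpLift (image.ι (i ≫ β.kerQuot)) hiso') z) := by rw [hz]
      _ = (β.reduceKernel.perpLift (image.ι (i ≫ β.kerQuot)) hiso' ≫
            kernel.ι (β.reduceKernel.form ≫ 𝒟.P.map (image.ι (i ≫ β.kerQuot)))) z :=
          (Abelian.Pseudoelement.comp_apply _ _ _).symm
      _ = (image.ι (i ≫ β.kerQuot)) z := by rw [SymmForm.perpLift_ι]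
      _ = (image.ι (i ≫ β.kerQuot)) ((factorThruImage (i ≫ β.kerQuot)) ξ') := by rw [hξ']
      _ = (factorThruImage (i ≫ β.kerQuot) ≫ image.ι (i ≫ β.kerQuot)) ξ' :=
          (Abelian.Pseudoelement.comp_apply _ _ _).symm
      _ = (i ≫ β.kerQuot) ξ' := by rw [image.fac]
      _ = β.kerQuot (i ξ') := Abelian.Pseudoelement.comp_apply _ _ _
  obtain ⟨w, hw0, hwg⟩ := Abelian.Pseudoelement.sub_of_eq_image β.kerQuot
    ((kernel.ι (β.form ≫ 𝒟.P.map i)) y) (i ξ') hkq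
  have h2 : (pi3 𝒟 β) ((tmap 𝒟 β) w) = 0 := by
    calc (pi3 𝒟 β) ((tmap 𝒟 β) w)
        = (tmap 𝒟 β ≫ pi3 𝒟 β) w := (Abelian.Pseudoelement.comp_apply _ _ _).symm
      _ = β.kerQuot w := by rw [← kerQuot_eq]
      _ = 0 := hw0
  obtain ⟨w', hw'⟩ := Abelian.Pseudoelement.pseudo_exact_of_exact
    (ShortComplex.exact_cokernel (β.perpLift (kernel.ι β.form)
      (form_kernel_isotropic 𝒟 β))) ((tmap 𝒟 β) w) h2
  have hFw : β.form w = 0 := by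
    calc β.form w
        = ((tmap 𝒟 β ≫ kernel.ι (β.form ≫ 𝒟.P.map (kernel.ι β.form))) ≫ β.form) w := by
          rw [tmap_ι, Category.id_comp]
      _ = (kernel.ι (β.form ≫ 𝒟.P.map (kernel.ι β.form)) ≫ β.form) ((tmap 𝒟 β) w) := by
          rw [Category.assoc]
          exact Abelian.Pseudoelement.comp_apply _ _ _
      _ = (kernel.ι (β.form ≫ 𝒟.P.map (kernel.ι β.form)) ≫ β.form)
            ((β.perpLift (kernel.ι β.form) (form_kernel_isotropic 𝒟 β)) w') := by rw [hw']
      _ = (β.perpLift (kernel.ι β.form) (form_kernel_isotropic 𝒟 β) ≫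
            kernel.ι (β.form ≫ 𝒟.P.map (kernel.ι β.form)) ≫ β.form) w' :=
          (Abelian.Pseudoelement.comp_apply _ _ _).symm
      _ = ((β.perpLift (kernel.ι β.form) (form_kernel_isotropic 𝒟 β) ≫
            kernel.ι (β.form ≫ 𝒟.P.map (kernel.ι β.form))) ≫ β.form) w' := by
          rw [Category.assoc]
      _ = 0 := by rw [SymmForm.perpLift_ι, kernel.condition,
            Abelian.Pseudoelement.zero_apply]
  have hga : (β.form ≫ 𝒟.P.map (kernel.ι (β.form ≫ 𝒟.P.map i))) (i ξ') = 0 := by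
    calc (β.form ≫ 𝒟.P.map (kernel.ι (β.form ≫ 𝒟.P.map i))) (i ξ')
        = (i ≫ β.form ≫ 𝒟.P.map (kernel.ι (β.form ≫ 𝒟.P.map i))) ξ' :=
          (Abelian.Pseudoelement.comp_apply _ _ _).symm
      _ = 0 := by rw [c9 𝒟 β i, Abelian.Pseudoelement.zero_apply]
  have h3 := hwg _ (β.form ≫ 𝒟.P.map (kernel.ι (β.form ≫ 𝒟.P.map i))) hga
  have h4 : ((β.reduce i hiso).form) ((cokernel.π (β.perpLift i hiso)) y) = 0 := by
    haveI : Mono (𝒟.P.map (cokernel.π (β.perpLift i hiso))) := mapMonoOfEpi 𝒟 _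
    apply Abelian.Pseudoelement.pseudo_injective_of_mono
      (𝒟.P.map (cokernel.π (β.perpLift i hiso)))
    calc (𝒟.P.map (cokernel.π (β.perpLift i hiso)))
          (((β.reduce i hiso).form) ((cokernel.π (β.perpLift i hiso)) y))
        = ((β.reduce i hiso).form ≫ 𝒟.P.map (cokernel.π (β.perpLift i hiso)))
            ((cokernel.π (β.perpLift i hiso)) y) :=
          (Abelian.Pseudoelement.comp_apply _ _ _).symm
      _ = (cokernel.π (β.perpLift i hiso) ≫ (β.reduce i hiso).form ≫
            𝒟.P.map (cokernel.π (β.perpLift i hiso))) y :=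
          (Abelian.Pseudoelement.comp_apply _ _ _).symm
      _ = (kernel.ι (β.form ≫ 𝒟.P.map i) ≫ β.form ≫
            𝒟.P.map (kernel.ι (β.form ≫ 𝒟.P.map i))) y := by rw [reduce_char 𝒟 β i hiso]
      _ = (β.form ≫ 𝒟.P.map (kernel.ι (β.form ≫ 𝒟.P.map i)))
            ((kernel.ι (β.form ≫ 𝒟.P.map i)) y) := Abelian.Pseudoelement.comp_apply _ _ _
      _ = (β.form ≫ 𝒟.P.map (kernel.ι (β.form ≫ 𝒟.P.map i))) w := h3.symm
      _ = (𝒟.P.map (kernel.ι (β.form ≫ 𝒟.P.map i))) (β.form w) :=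
          Abelian.Pseudoelement.comp_apply _ _ _
      _ = 0 := by rw [hFw, Abelian.Pseudoelement.apply_zero]
      _ = (𝒟.P.map (cokernel.π (β.perpLift i hiso))) 0 :=
          (Abelian.Pseudoelement.apply_zero _).symm
  obtain ⟨cζ, hcζ⟩ := Abelian.Pseudoelement.pseudo_exact_of_exact
    (ShortComplex.exact_kernel (β.reduce i hiso).form)
    ((cokernel.π (β.perpLift i hiso)) y) h4
  have hqx : ((β.reduce i hiso).perpLift (kernel.ι (β.reduce i hiso).form)
      (form_kernel_isotropic 𝒟 (β.reduce i hiso))) cζ = x₂ := by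
    haveI := isIso_iota2 𝒟 β i hiso
    apply Abelian.Pseudoelement.pseudo_injective_of_mono
      (kernel.ι ((β.reduce i hiso).form ≫ 𝒟.P.map (kernel.ι (β.reduce i hiso).form)))
    calc (kernel.ι ((β.reduce i hiso).form ≫ 𝒟.P.map (kernel.ι (β.reduce i hiso).form)))
          (((β.reduce i hiso).perpLift (kernel.ι (β.reduce i hiso).form)
            (form_kernel_isotropic 𝒟 (β.reduce i hiso))) cζ)
        = ((β.reduce i hiso).perpLift (kernel.ι (β.reduce i hiso).form)
            (form_kernel_isotropic 𝒟 (β.reduce i hiso)) ≫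
            kernel.ι ((β.reduce i hiso).form ≫
              𝒟.P.map (kernel.ι (β.reduce i hiso).form))) cζ :=
          (Abelian.Pseudoelement.comp_apply _ _ _).symm
      _ = (kernel.ι (β.reduce i hiso).form) cζ := by rw [SymmForm.perpLift_ι]
      _ = (cokernel.π (β.perpLift i hiso)) y := hcζ
      _ = (kernel.ι ((β.reduce i hiso).form ≫
            𝒟.P.map (kernel.ι (β.reduce i hiso).form))) x₂ := hy
  calc x = (cokernel.π ((β.reduce i hiso).perpLift (kernel.ι (β.reduce i hiso).form)
        (form_kernel_isotropic 𝒟 (β.reduce i hiso)))) x₂ := hx₂.symm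
    _ = (cokernel.π ((β.reduce i hiso).perpLift (kernel.ι (β.reduce i hiso).form)
          (form_kernel_isotropic 𝒟 (β.reduce i hiso))))
          (((β.reduce i hiso).perpLift (kernel.ι (β.reduce i hiso).form)
            (form_kernel_isotropic 𝒟 (β.reduce i hiso))) cζ) := by rw [hqx]
    _ = ((β.reduce i hiso).perpLift (kernel.ι (β.reduce i hiso).form)
          (form_kernel_isotropic 𝒟 (β.reduce i hiso)) ≫
          cokernel.π ((β.reduce i hiso).perpLift (kernel.ι (β.reduce i hiso).form)
            (form_kernel_isotropic 𝒟 (β.reduce i hiso)))) cζ :=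
        (Abelian.Pseudoelement.comp_apply _ _ _).symm
    _ = 0 := by rw [cokernel.condition, Abelian.Pseudoelement.zero_apply]

lemma epi_fmap : Epi (fmap 𝒟 β i hiso hiso') := by
  apply Abelian.Pseudoelement.epi_of_pseudo_surjective
  intro c
  obtain ⟨d, hd⟩ := Abelian.Pseudoelement.pseudo_surjective_of_epi
    (cokernel.π (β.reduceKernel.perpLift (image.ι (i ≫ β.kerQuot)) hiso')) c
  haveI := epi_kerQuot 𝒟 β
  obtain ⟨xb, hxb⟩ := Abelian.Pseudoelement.pseudo_surjective_of_epi β.kerQuot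
    ((kernel.ι (β.reduceKernel.form ≫ 𝒟.P.map (image.ι (i ≫ β.kerQuot)))) d)
  have hmid : (β.kerQuot ≫ β.reduceKernel.form ≫
      𝒟.P.map (image.ι (i ≫ β.kerQuot))) xb = 0 := by
    calc (β.kerQuot ≫ β.reduceKernel.form ≫ 𝒟.P.map (image.ι (i ≫ β.kerQuot))) xb
        = (β.reduceKernel.form ≫ 𝒟.P.map (image.ι (i ≫ β.kerQuot))) (β.kerQuot xb) :=
          Abelian.Pseudoelement.comp_apply _ _ _
      _ = (β.reduceKernel.form ≫ 𝒟.P.map (image.ι (i ≫ β.kerQuot)))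
            ((kernel.ι (β.reduceKernel.form ≫
              𝒟.P.map (image.ι (i ≫ β.kerQuot)))) d) := by rw [hxb]
      _ = (kernel.ι (β.reduceKernel.form ≫ 𝒟.P.map (image.ι (i ≫ β.kerQuot))) ≫
            β.reduceKernel.form ≫ 𝒟.P.map (image.ι (i ≫ β.kerQuot))) d :=
          (Abelian.Pseudoelement.comp_apply _ _ _).symm
      _ = 0 := by rw [kernel.condition, Abelian.Pseudoelement.zero_apply]
  have hxb0 : (β.form ≫ 𝒟.P.map i) xb = 0 := by
    have hsplit : β.kerQuot ≫ β.reduceKernel.form ≫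
        𝒟.P.map (image.ι (i ≫ β.kerQuot)) ≫ 𝒟.P.map (factorThruImage (i ≫ β.kerQuot)) =
        (β.kerQuot ≫ β.reduceKernel.form ≫ 𝒟.P.map (image.ι (i ≫ β.kerQuot))) ≫
          𝒟.P.map (factorThruImage (i ≫ β.kerQuot)) := by simp only [Category.assoc]
    calc (β.form ≫ 𝒟.P.map i) xb
        = (β.kerQuot ≫ β.reduceKernel.form ≫ 𝒟.P.map (image.ι (i ≫ β.kerQuot)) ≫
            𝒟.P.map (factorThruImage (i ≫ β.kerQuot))) xb := by rw [c8 𝒟 β i]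
      _ = ((β.kerQuot ≫ β.reduceKernel.form ≫ 𝒟.P.map (image.ι (i ≫ β.kerQuot))) ≫
            𝒟.P.map (factorThruImage (i ≫ β.kerQuot))) xb := by rw [hsplit]
      _ = (𝒟.P.map (factorThruImage (i ≫ β.kerQuot)))
            ((β.kerQuot ≫ β.reduceKernel.form ≫
              𝒟.P.map (image.ι (i ≫ β.kerQuot))) xb) :=
          Abelian.Pseudoelement.comp_apply _ _ _
      _ = 0 := by rw [hmid, Abelian.Pseudoelement.apply_zero]
  obtain ⟨y, hy⟩ := Abelian.Pseudoelement.pseudo_exact_of_exact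
    (ShortComplex.exact_kernel (β.form ≫ 𝒟.P.map i)) xb hxb0
  have hvd : (vmap 𝒟 β i) y = d := by
    apply Abelian.Pseudoelement.pseudo_injective_of_mono
      (kernel.ι (β.reduceKernel.form ≫ 𝒟.P.map (image.ι (i ≫ β.kerQuot))))
    calc (kernel.ι (β.reduceKernel.form ≫ 𝒟.P.map (image.ι (i ≫ β.kerQuot))))
          ((vmap 𝒟 β i) y)
        = (vmap 𝒟 β i ≫ kernel.ι (β.reduceKernel.form ≫
            𝒟.P.map (image.ι (i ≫ β.kerQuot)))) y :=
          (Abelian.Pseudoelement.comp_apply _ _ _).symm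
      _ = (kernel.ι (β.form ≫ 𝒟.P.map i) ≫ β.kerQuot) y := by rw [vmap_ι]
      _ = β.kerQuot ((kernel.ι (β.form ≫ 𝒟.P.map i)) y) :=
          Abelian.Pseudoelement.comp_apply _ _ _
      _ = β.kerQuot xb := by rw [hy]
      _ = (kernel.ι (β.reduceKernel.form ≫ 𝒟.P.map (image.ι (i ≫ β.kerQuot)))) d := hxb
  haveI := isIso_iota2 𝒟 β i hiso
  obtain ⟨x₂, hx₂⟩ := Abelian.Pseudoelement.pseudo_surjective_of_epi
    (kernel.ι ((β.reduce i hiso).form ≫ 𝒟.P.map (kernel.ι (β.reduce i hiso).form)))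
    ((cokernel.π (β.perpLift i hiso)) y)
  refine ⟨(cokernel.π ((β.reduce i hiso).perpLift (kernel.ι (β.reduce i hiso).form)
    (form_kernel_isotropic 𝒟 (β.reduce i hiso)))) x₂, ?_⟩
  calc (fmap 𝒟 β i hiso hiso')
        ((cokernel.π ((β.reduce i hiso).perpLift (kernel.ι (β.reduce i hiso).form)
          (form_kernel_isotropic 𝒟 (β.reduce i hiso)))) x₂)
      = (cokernel.π ((β.reduce i hiso).perpLift (kernel.ι (β.reduce i hiso).form)
          (form_kernel_isotropic 𝒟 (β.reduce i hiso))) ≫ fmap 𝒟 β i hiso hiso') x₂ :=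
        (Abelian.Pseudoelement.comp_apply _ _ _).symm
    _ = (kernel.ι ((β.reduce i hiso).form ≫ 𝒟.P.map (kernel.ι (β.reduce i hiso).form)) ≫
          gmap 𝒟 β i hiso hiso') x₂ := by rw [fmap_fac 𝒟 β i hiso hiso']
    _ = (gmap 𝒟 β i hiso hiso')
          ((kernel.ι ((β.reduce i hiso).form ≫
            𝒟.P.map (kernel.ι (β.reduce i hiso).form))) x₂) :=
        Abelian.Pseudoelement.comp_apply _ _ _
    _ = (gmap 𝒟 β i hiso hiso') ((cokernel.π (β.perpLift i hiso)) y) := by rw [hx₂]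
    _ = (cokernel.π (β.perpLift i hiso) ≫ gmap 𝒟 β i hiso hiso') y :=
        (Abelian.Pseudoelement.comp_apply _ _ _).symm
    _ = (vmap 𝒟 β i ≫
          cokernel.π (β.reduceKernel.perpLift (image.ι (i ≫ β.kerQuot)) hiso')) y := by
        rw [gmap_fac 𝒟 β i hiso hiso']
    _ = (cokernel.π (β.reduceKernel.perpLift (image.ι (i ≫ β.kerQuot)) hiso'))
          ((vmap 𝒟 β i) y) := Abelian.Pseudoelement.comp_apply _ _ _
    _ = (cokernel.π (β.reduceKernel.perpLift (image.ι (i ≫ β.kerQuot)) hiso')) d := by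
        rw [hvd]
    _ = c := hd

lemma form_fmap : (β.reduce i hiso).reduceKernel.form =
    fmap 𝒟 β i hiso hiso' ≫
      (β.reduceKernel.reduce (image.ι (i ≫ β.kerQuot)) hiso').form ≫
      𝒟.P.map (fmap 𝒟 β i hiso hiso') := by
  have main : (β.reduce i hiso).form = gmap 𝒟 β i hiso hiso' ≫
      (β.reduceKernel.reduce (image.ι (i ≫ β.kerQuot)) hiso').form ≫
      𝒟.P.map (gmap 𝒟 β i hiso hiso') := by
    haveI : Mono (𝒟.P.map (cokernel.π (β.perpLift i hiso))) := mapMonoOfEpi 𝒟 _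
    have hL := reduce_char 𝒟 β i hiso
    have hDg : 𝒟.P.map (gmap 𝒟 β i hiso hiso') ≫
        𝒟.P.map (cokernel.π (β.perpLift i hiso)) =
        𝒟.P.map (cokernel.π (β.reduceKernel.perpLift (image.ι (i ≫ β.kerQuot)) hiso')) ≫
        𝒟.P.map (vmap 𝒟 β i) := by
      rw [← 𝒟.P.map_comp, gmap_fac 𝒟 β i hiso hiso', 𝒟.P.map_comp]
    have hDv : 𝒟.P.map (kernel.ι (β.reduceKernel.form ≫
        𝒟.P.map (image.ι (i ≫ β.kerQuot)))) ≫ 𝒟.P.map (vmap 𝒟 β i) =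
        𝒟.P.map β.kerQuot ≫ 𝒟.P.map (kernel.ι (β.form ≫ 𝒟.P.map i)) := by
      rw [← 𝒟.P.map_comp, vmap_ι, 𝒟.P.map_comp]
    have hR : cokernel.π (β.perpLift i hiso) ≫
        (gmap 𝒟 β i hiso hiso' ≫
          (β.reduceKernel.reduce (image.ι (i ≫ β.kerQuot)) hiso').form ≫
          𝒟.P.map (gmap 𝒟 β i hiso hiso')) ≫
        𝒟.P.map (cokernel.π (β.perpLift i hiso)) =
        kernel.ι (β.form ≫ 𝒟.P.map i) ≫ β.form ≫
          𝒟.P.map (kernel.ι (β.form ≫ 𝒟.P.map i)) := by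
      calc cokernel.π (β.perpLift i hiso) ≫
            (gmap 𝒟 β i hiso hiso' ≫
              (β.reduceKernel.reduce (image.ι (i ≫ β.kerQuot)) hiso').form ≫
              𝒟.P.map (gmap 𝒟 β i hiso hiso')) ≫
            𝒟.P.map (cokernel.π (β.perpLift i hiso))
          = (cokernel.π (β.perpLift i hiso) ≫ gmap 𝒟 β i hiso hiso') ≫
              (β.reduceKernel.reduce (image.ι (i ≫ β.kerQuot)) hiso').form ≫
              (𝒟.P.map (gmap 𝒟 β i hiso hiso') ≫
                𝒟.P.map (cokernel.π (β.perpLift i hiso))) := by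
            simp only [Category.assoc]
        _ = (vmap 𝒟 β i ≫
              cokernel.π (β.reduceKernel.perpLift (image.ι (i ≫ β.kerQuot)) hiso')) ≫
              (β.reduceKernel.reduce (image.ι (i ≫ β.kerQuot)) hiso').form ≫
              (𝒟.P.map (cokernel.π (β.reduceKernel.perpLift
                (image.ι (i ≫ β.kerQuot)) hiso')) ≫ 𝒟.P.map (vmap 𝒟 β i)) := by
            rw [gmap_fac 𝒟 β i hiso hiso', hDg]
        _ = vmap 𝒟 β i ≫
              (cokernel.π (β.reduceKernel.perpLift (image.ι (i ≫ β.kerQuot)) hiso') ≫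
                (β.reduceKernel.reduce (image.ι (i ≫ β.kerQuot)) hiso').form ≫
                𝒟.P.map (cokernel.π (β.reduceKernel.perpLift
                  (image.ι (i ≫ β.kerQuot)) hiso'))) ≫ 𝒟.P.map (vmap 𝒟 β i) := by
            simp only [Category.assoc]
        _ = vmap 𝒟 β i ≫
              (kernel.ι (β.reduceKernel.form ≫ 𝒟.P.map (image.ι (i ≫ β.kerQuot))) ≫
                β.reduceKernel.form ≫
                𝒟.P.map (kernel.ι (β.reduceKernel.form ≫
                  𝒟.P.map (image.ι (i ≫ β.kerQuot))))) ≫ 𝒟.P.map (vmap 𝒟 β i) := by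
            rw [reduce_char 𝒟 β.reduceKernel (image.ι (i ≫ β.kerQuot)) hiso']
        _ = (vmap 𝒟 β i ≫
              kernel.ι (β.reduceKernel.form ≫ 𝒟.P.map (image.ι (i ≫ β.kerQuot)))) ≫
              β.reduceKernel.form ≫
              (𝒟.P.map (kernel.ι (β.reduceKernel.form ≫
                𝒟.P.map (image.ι (i ≫ β.kerQuot)))) ≫ 𝒟.P.map (vmap 𝒟 β i)) := by
            simp only [Category.assoc]
        _ = (kernel.ι (β.form ≫ 𝒟.P.map i) ≫ β.kerQuot) ≫
              β.reduceKernel.form ≫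
              (𝒟.P.map β.kerQuot ≫ 𝒟.P.map (kernel.ι (β.form ≫ 𝒟.P.map i))) := by
            rw [vmap_ι, hDv]
        _ = kernel.ι (β.form ≫ 𝒟.P.map i) ≫
              (β.kerQuot ≫ β.reduceKernel.form ≫ 𝒟.P.map β.kerQuot) ≫
              𝒟.P.map (kernel.ι (β.form ≫ 𝒟.P.map i)) := by
            simp only [Category.assoc]
        _ = kernel.ι (β.form ≫ 𝒟.P.map i) ≫ β.form ≫
              𝒟.P.map (kernel.ι (β.form ≫ 𝒟.P.map i)) := by rw [c7 𝒟 β]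
    have h2 : (cokernel.π (β.perpLift i hiso) ≫ (β.reduce i hiso).form) ≫
        𝒟.P.map (cokernel.π (β.perpLift i hiso)) =
        (cokernel.π (β.perpLift i hiso) ≫
          (gmap 𝒟 β i hiso hiso' ≫
            (β.reduceKernel.reduce (image.ι (i ≫ β.kerQuot)) hiso').form ≫
            𝒟.P.map (gmap 𝒟 β i hiso hiso'))) ≫
        𝒟.P.map (cokernel.π (β.perpLift i hiso)) := by
      simpa only [Category.assoc] using hL.trans hR.symm
    exact (cancel_epi (cokernel.π (β.perpLift i hiso))).1
      ((cancel_mono (𝒟.P.map (cokernel.π (β.perpLift i hiso)))).1 h2)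
  haveI : Mono (𝒟.P.map (cokernel.π ((β.reduce i hiso).perpLift
      (kernel.ι (β.reduce i hiso).form)
      (form_kernel_isotropic 𝒟 (β.reduce i hiso))))) := mapMonoOfEpi 𝒟 _
  have e1' := reduce_char 𝒟 (β.reduce i hiso) (kernel.ι (β.reduce i hiso).form)
    (form_kernel_isotropic 𝒟 (β.reduce i hiso))
  have hDf : 𝒟.P.map (fmap 𝒟 β i hiso hiso') ≫
      𝒟.P.map (cokernel.π ((β.reduce i hiso).perpLift (kernel.ι (β.reduce i hiso).form)
        (form_kernel_isotropic 𝒟 (β.reduce i hiso)))) =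
      𝒟.P.map (gmap 𝒟 β i hiso hiso') ≫
      𝒟.P.map (kernel.ι ((β.reduce i hiso).form ≫
        𝒟.P.map (kernel.ι (β.reduce i hiso).form))) := by
    rw [← 𝒟.P.map_comp, fmap_fac 𝒟 β i hiso hiso', 𝒟.P.map_comp]
  have hR2 : cokernel.π ((β.reduce i hiso).perpLift (kernel.ι (β.reduce i hiso).form)
      (form_kernel_isotropic 𝒟 (β.reduce i hiso))) ≫
      (fmap 𝒟 β i hiso hiso' ≫
        (β.reduceKernel.reduce (image.ι (i ≫ β.kerQuot)) hiso').form ≫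
        𝒟.P.map (fmap 𝒟 β i hiso hiso')) ≫
      𝒟.P.map (cokernel.π ((β.reduce i hiso).perpLift (kernel.ι (β.reduce i hiso).form)
        (form_kernel_isotropic 𝒟 (β.reduce i hiso)))) =
      kernel.ι ((β.reduce i hiso).form ≫ 𝒟.P.map (kernel.ι (β.reduce i hiso).form)) ≫
        (β.reduce i hiso).form ≫
        𝒟.P.map (kernel.ι ((β.reduce i hiso).form ≫
          𝒟.P.map (kernel.ι (β.reduce i hiso).form))) := by
    calc cokernel.π ((β.reduce i hiso).perpLift (kernel.ι (β.reduce i hiso).form)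
          (form_kernel_isotropic 𝒟 (β.reduce i hiso))) ≫
          (fmap 𝒟 β i hiso hiso' ≫
            (β.reduceKernel.reduce (image.ι (i ≫ β.kerQuot)) hiso').form ≫
            𝒟.P.map (fmap 𝒟 β i hiso hiso')) ≫
          𝒟.P.map (cokernel.π ((β.reduce i hiso).perpLift
            (kernel.ι (β.reduce i hiso).form)
            (form_kernel_isotropic 𝒟 (β.reduce i hiso))))
        = (cokernel.π ((β.reduce i hiso).perpLift (kernel.ι (β.reduce i hiso).form)
            (form_kernel_isotropic 𝒟 (β.reduce i hiso))) ≫ fmap 𝒟 β i hiso hiso') ≫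
            (β.reduceKernel.reduce (image.ι (i ≫ β.kerQuot)) hiso').form ≫
            (𝒟.P.map (fmap 𝒟 β i hiso hiso') ≫
              𝒟.P.map (cokernel.π ((β.reduce i hiso).perpLift
                (kernel.ι (β.reduce i hiso).form)
                (form_kernel_isotropic 𝒟 (β.reduce i hiso))))) := by
          simp only [Category.assoc]
      _ = (kernel.ι ((β.reduce i hiso).form ≫
            𝒟.P.map (kernel.ι (β.reduce i hiso).form)) ≫ gmap 𝒟 β i hiso hiso') ≫
            (β.reduceKernel.reduce (image.ι (i ≫ β.kerQuot)) hiso').form ≫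
            (𝒟.P.map (gmap 𝒟 β i hiso hiso') ≫
              𝒟.P.map (kernel.ι ((β.reduce i hiso).form ≫
                𝒟.P.map (kernel.ι (β.reduce i hiso).form)))) := by
          rw [fmap_fac 𝒟 β i hiso hiso', hDf]
      _ = kernel.ι ((β.reduce i hiso).form ≫
            𝒟.P.map (kernel.ι (β.reduce i hiso).form)) ≫
            (gmap 𝒟 β i hiso hiso' ≫
              (β.reduceKernel.reduce (image.ι (i ≫ β.kerQuot)) hiso').form ≫
              𝒟.P.map (gmap 𝒟 β i hiso hiso')) ≫
            𝒟.P.map (kernel.ι ((β.reduce i hiso).form ≫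
              𝒟.P.map (kernel.ι (β.reduce i hiso).form))) := by
          simp only [Category.assoc]
      _ = kernel.ι ((β.reduce i hiso).form ≫
            𝒟.P.map (kernel.ι (β.reduce i hiso).form)) ≫
            (β.reduce i hiso).form ≫
            𝒟.P.map (kernel.ι ((β.reduce i hiso).form ≫
              𝒟.P.map (kernel.ι (β.reduce i hiso).form))) := by rw [← main]
  have h2 : (cokernel.π ((β.reduce i hiso).perpLift (kernel.ι (β.reduce i hiso).form)
      (form_kernel_isotropic 𝒟 (β.reduce i hiso))) ≫
      (β.reduce i hiso).reduceKernel.form) ≫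
      𝒟.P.map (cokernel.π ((β.reduce i hiso).perpLift (kernel.ι (β.reduce i hiso).form)
        (form_kernel_isotropic 𝒟 (β.reduce i hiso)))) =
      (cokernel.π ((β.reduce i hiso).perpLift (kernel.ι (β.reduce i hiso).form)
        (form_kernel_isotropic 𝒟 (β.reduce i hiso))) ≫
        (fmap 𝒟 β i hiso hiso' ≫
          (β.reduceKernel.reduce (image.ι (i ≫ β.kerQuot)) hiso').form ≫
          𝒟.P.map (fmap 𝒟 β i hiso hiso'))) ≫
      𝒟.P.map (cokernel.π ((β.reduce i hiso).perpLift (kernel.ι (β.reduce i hiso).form)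
        (form_kernel_isotropic 𝒟 (β.reduce i hiso)))) := by
    simpa only [Category.assoc] using e1'.trans hR2.symm
  exact (cancel_epi (cokernel.π ((β.reduce i hiso).perpLift
      (kernel.ι (β.reduce i hiso).form)
      (form_kernel_isotropic 𝒟 (β.reduce i hiso))))).1
    ((cancel_mono (𝒟.P.map (cokernel.π ((β.reduce i hiso).perpLift
      (kernel.ι (β.reduce i hiso).form)
      (form_kernel_isotropic 𝒟 (β.reduce i hiso)))))).1 h2)

end Stmt3

end Stmt3Final

/-! ## Statement 3
Reduction by the kernel commutes with isotropic reduction (Lemma "commuting reductions"):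
for an isotropic `i : a ↪ b` of a symmetric form `β`, the non-degenerate form induced on
the image of `β/a` is isometric to the reduction of `β̄` by `ā = im (a ↪ b ↠ im β)`. -/

theorem stmt_3 {A : Type u} [Category.{v} A] [Abelian A] (𝒟 : Duality A)
    (β : SymmForm 𝒟.P) {a : A} (i : a ⟶ β.carrier) (hi : Mono i)
    (hiso : i ≫ β.form ≫ 𝒟.P.map i = 0)
    -- `ā = im (a ↪ b ↠ im β)` is an isotropic subobject of `β̄`:
    (hiso' : Limits.image.ι (i ≫ β.kerQuot) ≫ β.reduceKernel.form ≫
        𝒟.P.map (Limits.image.ι (i ≫ β.kerQuot)) = 0) :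
    Isometric' ((β.reduce i hiso).reduceKernel)
      (β.reduceKernel.reduce (Limits.image.ι (i ≫ β.kerQuot)) hiso') := by
  haveI h1 : Mono (Stmt3.fmap 𝒟 β i hiso hiso') := Stmt3.mono_fmap 𝒟 β i hiso hiso'
  haveI h2 : Epi (Stmt3.fmap 𝒟 β i hiso hiso') := Stmt3.epi_fmap 𝒟 β i hiso hiso'
  exact ⟨Stmt3.fmap 𝒟 β i hiso hiso', isIso_of_mono_of_epi _,
    Stmt3.form_fmap 𝒟 β i hiso hiso'⟩
end

section
/- Let (A, D, χ) be an abelian category with exact duality, γ : c → Dc a symmetric form, and a ↪ c an isotropic subobject. Then taking the quotient by a induces a one-to-one correspondence between factorisations a ↪ b ↪ c with b isotropic for γ and isotropic subobjects of the reduced form γ/a; moreover for any such b there is an isometry γ/b ≅ (γ/a)/(b/a). -/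
open CategoryTheory CategoryTheory.Limits

universe v u v₁ u₁ v₂ u₂ v₃ u₃

section StagesAux

open Limits

variable {A : Type u} [Category.{v} A] [Abelian A]

lemma Duality.mono_map_of_epi (𝒟 : Duality A) {X Y : A} (f : X ⟶ Y) [Epi f] :
    Mono (𝒟.P.map f) := by
  apply Preadditive.mono_of_cancel_zero
  intro P g hg
  obtain ⟨h, hh⟩ := KernelFork.IsLimit.lift' (𝒟.dualCokernelIsKernel f) g hg
  rw [Fork.ι_ofι] at hh
  have hz : 𝒟.P.map (cokernel.π f) = 0 := by
    rw [cokernel.π_of_epi, 𝒟.P.map_zero]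
  have hg0 : g = h ≫ (0 : 𝒟.P.obj (cokernel f) ⟶ 𝒟.P.obj Y) := by
    rw [← hz]
    exact hh.symm
  rw [hg0, comp_zero]

lemma factor_of_comp_cokernelπ_zero {X Y Z : A} (p : X ⟶ Y) [Mono p] (d : Z ⟶ Y)
    (h : d ≫ cokernel.π p = 0) : ∃ s : Z ⟶ X, s ≫ p = d := by
  haveI hm : Mono (Abelian.factorThruImage p) := mono_of_mono_fac (Abelian.image.fac p)
  haveI : IsIso (Abelian.factorThruImage p) := isIso_of_mono_of_epi _
  have h2 : inv (Abelian.factorThruImage p) ≫ p = Abelian.image.ι p := by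
    rw [IsIso.inv_comp_eq]
    exact (Abelian.image.fac p).symm
  refine ⟨kernel.lift (cokernel.π p) d h ≫ inv (Abelian.factorThruImage p), ?_⟩
  rw [Category.assoc, h2]
  exact kernel.lift_ι _ _ _

lemma SymmForm.reduce_fac {𝒟 : Duality A} (β : SymmForm 𝒟.P) {a : A} (i : a ⟶ β.carrier)
    (hiso : i ≫ β.form ≫ 𝒟.P.map i = 0) :
    cokernel.π (β.perpLift i hiso) ≫ (β.reduce i hiso).form ≫
        𝒟.P.map (cokernel.π (β.perpLift i hiso)) =
      kernel.ι (β.form ≫ 𝒟.P.map i) ≫ β.form ≫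
        𝒟.P.map (kernel.ι (β.form ≫ 𝒟.P.map i)) := by
  have h1 : (β.reduce i hiso).form ≫ 𝒟.P.map (cokernel.π (β.perpLift i hiso)) =
      β.reducePre i hiso :=
    (KernelFork.IsLimit.lift' (𝒟.dualCokernelIsKernel (β.perpLift i hiso))
      (β.reducePre i hiso) (β.reduce_h2 i hiso)).2
  rw [h1]
  exact cokernel.π_desc _ _ _

/-- If `ℓ : b ⟶ K` is mono containing `a` (via `i' ≫ ℓ = p`, `p` mono) and `g` lands,
after passing to `K/a`, inside the image of `b`, then `g` factors through `b`. -/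
lemma abelian_preimage_lift {a K b X : A} (p : a ⟶ K) [Mono p]
    (ℓ : b ⟶ K) [Mono ℓ] (i' : a ⟶ b) (hp : i' ≫ ℓ = p)
    (g : X ⟶ K)
    (hg : (g ≫ cokernel.π p) ≫ cokernel.π (image.ι (ℓ ≫ cokernel.π p)) = 0) :
    ∃ t : X ⟶ b, t ≫ ℓ = g := by
  obtain ⟨h, hh⟩ := factor_of_comp_cokernelπ_zero (image.ι (ℓ ≫ cokernel.π p))
    (g ≫ cokernel.π p) hg
  have hd : (pullback.fst h (factorThruImage (ℓ ≫ cokernel.π p)) ≫ g -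
      pullback.snd h (factorThruImage (ℓ ≫ cokernel.π p)) ≫ ℓ) ≫ cokernel.π p = 0 := by
    rw [Preadditive.sub_comp, Category.assoc, Category.assoc, ← hh, ← Category.assoc,
      pullback.condition, Category.assoc, image.fac, sub_self]
  obtain ⟨s, hs⟩ := factor_of_comp_cokernelπ_zero p _ hd
  have ht' : (pullback.snd h (factorThruImage (ℓ ≫ cokernel.π p)) + s ≫ i') ≫ ℓ =
      pullback.fst h (factorThruImage (ℓ ≫ cokernel.π p)) ≫ g := by
    rw [Preadditive.add_comp, Category.assoc, hp, hs]
    abel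
  have hker : kernel.ι (pullback.fst h (factorThruImage (ℓ ≫ cokernel.π p))) ≫
      (pullback.snd h (factorThruImage (ℓ ≫ cokernel.π p)) + s ≫ i') = 0 := by
    rw [← cancel_mono ℓ, Category.assoc, ht', ← Category.assoc, kernel.condition, zero_comp,
      zero_comp]
  refine ⟨Abelian.epiDesc _ _ hker, ?_⟩
  rw [← cancel_epi (pullback.fst h (factorThruImage (ℓ ≫ cokernel.π p))), ← Category.assoc,
    Abelian.comp_epiDesc, ht']

/-- If a pullback-type square exists with `e` epi and `pT` mono, and the "kernel" of `w`
is contained in the image of `pa = i' ≫ pb`, then the induced map on cokernels is mono. -/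
lemma abelian_mono_desc {a b B T W : A} (pb : b ⟶ B) (w : B ⟶ W) (pT : T ⟶ W) [Mono pT]
    (e : b ⟶ T) [Epi e] (hsq : pb ≫ w = e ≫ pT)
    (pa : a ⟶ B) (i' : a ⟶ b) (hpa : i' ≫ pb = pa)
    (hker : ∀ {Z : A} (d : Z ⟶ B), d ≫ w = 0 → ∃ s : Z ⟶ a, s ≫ pa = d)
    (h0 : pb ≫ w ≫ cokernel.π pT = 0) :
    Mono (cokernel.desc pb (w ≫ cokernel.π pT) h0) := by
  apply Preadditive.mono_of_cancel_zero
  intro X g hg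
  have hu : cokernel.π pb ≫ cokernel.desc pb (w ≫ cokernel.π pT) h0 = w ≫ cokernel.π pT :=
    cokernel.π_desc _ _ _
  have h1 : (pullback.snd g (cokernel.π pb) ≫ w) ≫ cokernel.π pT = 0 := by
    rw [Category.assoc, ← hu, ← Category.assoc, ← pullback.condition, Category.assoc, hg,
      comp_zero]
  obtain ⟨h, hh⟩ := factor_of_comp_cokernelπ_zero pT _ h1
  have h2 : (pullback.fst h e ≫ pullback.snd g (cokernel.π pb) -
      pullback.snd h e ≫ pb) ≫ w = 0 := by
    rw [Preadditive.sub_comp, Category.assoc, Category.assoc, ← hh, hsq, ← Category.assoc,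
      pullback.condition, Category.assoc, sub_self]
  obtain ⟨s, hs⟩ := hker _ h2
  have h3 : (pullback.fst h e ≫ pullback.fst g (cokernel.π pb)) ≫ g = 0 := by
    have h4 : pullback.fst h e ≫ pullback.snd g (cokernel.π pb) =
        (pullback.snd h e + s ≫ i') ≫ pb := by
      rw [Preadditive.add_comp, Category.assoc, hpa, hs]
      abel
    rw [Category.assoc, pullback.condition, ← Category.assoc, h4, Category.assoc,
      cokernel.condition, comp_zero]
  exact zero_of_epi_comp _ h3

lemma epi_of_isPullback_of_epi {b K Q T : A} {kb : b ⟶ K} {v : b ⟶ T} {π : K ⟶ Q} [Epi π]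
    {τ : T ⟶ Q} (hpb : IsPullback kb v π τ) : Epi v := by
  rw [← hpb.isoPullback_hom_snd]
  exact epi_comp _ _

end StagesAux
set_option maxHeartbeats 4000000

/-! ## Statement 4
Reduction in stages (Lemma "reduction in stages"): for a symmetric form `γ` on `c` and an
isotropic `a ↪ c`, quotienting by `a` gives a one-to-one correspondence between isotropic
factorisations `a ↪ b ↪ c` and isotropic subobjects of `γ/a`, and `γ/b ≅ (γ/a)/(b/a)`. -/

theorem stmt_4 {A : Type u} [Category.{v} A] [Abelian A] (𝒟 : Duality A)
    (γ : SymmForm 𝒟.P) {a : A} (i : a ⟶ γ.carrier) (hi : Mono i)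
    (hiso : i ≫ γ.form ≫ 𝒟.P.map i = 0) :
    -- (1) the forward map: an isotropic factorisation `a ↪ b ↪ c` induces, by quotienting
    -- by `a`, an isotropic subobject `b/a` of the reduction `γ/a`
    (∀ (b : A) (i' : a ⟶ b) (k : b ⟶ γ.carrier), Mono k → i = i' ≫ k →
      k ≫ γ.form ≫ 𝒟.P.map k = 0 →
      ∀ wk : k ≫ (γ.form ≫ 𝒟.P.map i) = 0,
        Limits.image.ι (kernel.lift (γ.form ≫ 𝒟.P.map i) k wk ≫
              cokernel.π (γ.perpLift i hiso)) ≫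
            (γ.reduce i hiso).form ≫
            𝒟.P.map (Limits.image.ι (kernel.lift (γ.form ≫ 𝒟.P.map i) k wk ≫
              cokernel.π (γ.perpLift i hiso))) = 0) ∧
    -- (2) injectivity: two isotropic factorisations inducing the same subobject of `γ/a`
    -- are the same subobject of `c`
    (∀ (b₁ : A) (i₁ : a ⟶ b₁) (k₁ : b₁ ⟶ γ.carrier) (_ : Mono k₁) (_ : i = i₁ ≫ k₁)
      (_ : k₁ ≫ γ.form ≫ 𝒟.P.map k₁ = 0) (w₁ : k₁ ≫ (γ.form ≫ 𝒟.P.map i) = 0)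
      (b₂ : A) (i₂ : a ⟶ b₂) (k₂ : b₂ ⟶ γ.carrier) (_ : Mono k₂) (_ : i = i₂ ≫ k₂)
      (_ : k₂ ≫ γ.form ≫ 𝒟.P.map k₂ = 0) (w₂ : k₂ ≫ (γ.form ≫ 𝒟.P.map i) = 0)
      (e : Limits.image (kernel.lift (γ.form ≫ 𝒟.P.map i) k₁ w₁ ≫
              cokernel.π (γ.perpLift i hiso)) ≅
           Limits.image (kernel.lift (γ.form ≫ 𝒟.P.map i) k₂ w₂ ≫
              cokernel.π (γ.perpLift i hiso))),
      e.hom ≫ Limits.image.ι _ = Limits.image.ι _ →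
      ∃ f : b₁ ≅ b₂, f.hom ≫ k₂ = k₁) ∧
    -- (3) surjectivity: every isotropic subobject of `γ/a` arises this way
    (∀ (t : A) (τ : t ⟶ (γ.reduce i hiso).carrier), Mono τ →
      τ ≫ (γ.reduce i hiso).form ≫ 𝒟.P.map τ = 0 →
      ∃ (b : A) (i' : a ⟶ b) (k : b ⟶ γ.carrier) (_ : Mono k) (_ : i = i' ≫ k)
        (_ : k ≫ γ.form ≫ 𝒟.P.map k = 0) (wk : k ≫ (γ.form ≫ 𝒟.P.map i) = 0)
        (e : Limits.image (kernel.lift (γ.form ≫ 𝒟.P.map i) k wk ≫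
              cokernel.π (γ.perpLift i hiso)) ≅ t),
        e.hom ≫ τ = Limits.image.ι _) ∧
    -- (4) reduction in stages: `γ/b ≅ (γ/a)/(b/a)`
    (∀ (b : A) (i' : a ⟶ b) (k : b ⟶ γ.carrier) (_ : Mono k) (_ : i = i' ≫ k)
      (hk : k ≫ γ.form ≫ 𝒟.P.map k = 0) (wk : k ≫ (γ.form ≫ 𝒟.P.map i) = 0)
      (hT : Limits.image.ι (kernel.lift (γ.form ≫ 𝒟.P.map i) k wk ≫
              cokernel.π (γ.perpLift i hiso)) ≫
            (γ.reduce i hiso).form ≫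
            𝒟.P.map (Limits.image.ι (kernel.lift (γ.form ≫ 𝒟.P.map i) k wk ≫
              cokernel.π (γ.perpLift i hiso))) = 0),
      Isometric' (γ.reduce k hk)
        ((γ.reduce i hiso).reduce
          (Limits.image.ι (kernel.lift (γ.form ≫ 𝒟.P.map i) k wk ≫
            cokernel.π (γ.perpLift i hiso))) hT)) := by
  haveI hpmono : Mono (γ.perpLift i hiso) := mono_of_mono_fac (γ.perpLift_ι i hiso)
  have hredi := γ.reduce_fac i hiso
  refine ⟨?_, ?_, ?_, ?_⟩
  · -- (1)
    intro b i' k hkm hfac hkiso wk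
    haveI := hkm
    have hlι : kernel.lift (γ.form ≫ 𝒟.P.map i) k wk ≫ kernel.ι (γ.form ≫ 𝒟.P.map i) = k := kernel.lift_ι _ _ _
    haveI : Mono (𝒟.P.map (factorThruImage (kernel.lift (γ.form ≫ 𝒟.P.map i) k wk ≫ cokernel.π (γ.perpLift i hiso)))) :=
      𝒟.mono_map_of_epi _
    have hDm : 𝒟.P.map (image.ι (kernel.lift (γ.form ≫ 𝒟.P.map i) k wk ≫ cokernel.π (γ.perpLift i hiso))) ≫
        𝒟.P.map (factorThruImage (kernel.lift (γ.form ≫ 𝒟.P.map i) k wk ≫ cokernel.π (γ.perpLift i hiso))) =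
        𝒟.P.map (cokernel.π (γ.perpLift i hiso)) ≫ 𝒟.P.map (kernel.lift (γ.form ≫ 𝒟.P.map i) k wk) := by
      rw [← 𝒟.P.map_comp, ← 𝒟.P.map_comp, image.fac]
    have hDk : 𝒟.P.map (kernel.ι (γ.form ≫ 𝒟.P.map i)) ≫ 𝒟.P.map (kernel.lift (γ.form ≫ 𝒟.P.map i) k wk) = 𝒟.P.map k := by
      rw [← 𝒟.P.map_comp, hlι]
    rw [← cancel_mono (𝒟.P.map (factorThruImage (kernel.lift (γ.form ≫ 𝒟.P.map i) k wk ≫ cokernel.π (γ.perpLift i hiso)))), zero_comp,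
      ← cancel_epi (factorThruImage (kernel.lift (γ.form ≫ 𝒟.P.map i) k wk ≫ cokernel.π (γ.perpLift i hiso))), comp_zero]
    try simp only [Category.assoc]
    slice_lhs 4 5 => rw [hDm]
    try simp only [Category.assoc]
    slice_lhs 1 2 => rw [image.fac]
    try simp only [Category.assoc]
    slice_lhs 2 4 => rw [hredi]
    try simp only [Category.assoc]
    slice_lhs 4 5 => rw [hDk]
    try simp only [Category.assoc]
    slice_lhs 1 2 => rw [hlι]
    try simp only [Category.assoc]
    exact hkiso
  · -- (2)
    intro b₁ i₁ k₁ hm₁ hf₁ hiso₁ w₁ b₂ i₂ k₂ hm₂ hf₂ hiso₂ w₂ e he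
    haveI := hm₁; haveI := hm₂
    haveI : Mono (γ.perpLift i hiso) := mono_of_mono_fac (γ.perpLift_ι i hiso)
    have hι₁ : kernel.lift (γ.form ≫ 𝒟.P.map i) k₁ w₁ ≫ kernel.ι (γ.form ≫ 𝒟.P.map i) = k₁ := kernel.lift_ι _ _ _
    have hι₂ : kernel.lift (γ.form ≫ 𝒟.P.map i) k₂ w₂ ≫ kernel.ι (γ.form ≫ 𝒟.P.map i) = k₂ := kernel.lift_ι _ _ _
    haveI : Mono (kernel.lift (γ.form ≫ 𝒟.P.map i) k₁ w₁) := mono_of_mono_fac hι₁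
    haveI : Mono (kernel.lift (γ.form ≫ 𝒟.P.map i) k₂ w₂) := mono_of_mono_fac hι₂
    have hil₁ : i₁ ≫ kernel.lift (γ.form ≫ 𝒟.P.map i) k₁ w₁ = (γ.perpLift i hiso) := by
      rw [← cancel_mono (kernel.ι (γ.form ≫ 𝒟.P.map i)), Category.assoc, hι₁, ← hf₁]
      exact (γ.perpLift_ι i hiso).symm
    have hil₂ : i₂ ≫ kernel.lift (γ.form ≫ 𝒟.P.map i) k₂ w₂ = (γ.perpLift i hiso) := by
      rw [← cancel_mono (kernel.ι (γ.form ≫ 𝒟.P.map i)), Category.assoc, hι₂, ← hf₂]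
      exact (γ.perpLift_ι i hiso).symm
    have hj12 : kernel.lift (γ.form ≫ 𝒟.P.map i) k₁ w₁ ≫ cokernel.π (γ.perpLift i hiso) =
        (factorThruImage (kernel.lift (γ.form ≫ 𝒟.P.map i) k₁ w₁ ≫ cokernel.π (γ.perpLift i hiso)) ≫ e.hom) ≫
        image.ι (kernel.lift (γ.form ≫ 𝒟.P.map i) k₂ w₂ ≫ cokernel.π (γ.perpLift i hiso)) := by
      rw [Category.assoc, he, image.fac]
    have hg₁ : (kernel.lift (γ.form ≫ 𝒟.P.map i) k₁ w₁ ≫ cokernel.π (γ.perpLift i hiso)) ≫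
        cokernel.π (image.ι (kernel.lift (γ.form ≫ 𝒟.P.map i) k₂ w₂ ≫ cokernel.π (γ.perpLift i hiso))) = 0 := by
      rw [hj12, Category.assoc, cokernel.condition, comp_zero]
    obtain ⟨t, ht⟩ := abelian_preimage_lift (γ.perpLift i hiso) (kernel.lift (γ.form ≫ 𝒟.P.map i) k₂ w₂) i₂ hil₂
      (kernel.lift (γ.form ≫ 𝒟.P.map i) k₁ w₁) hg₁
    have he' : e.inv ≫ image.ι (kernel.lift (γ.form ≫ 𝒟.P.map i) k₁ w₁ ≫ cokernel.π (γ.perpLift i hiso)) =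
        image.ι (kernel.lift (γ.form ≫ 𝒟.P.map i) k₂ w₂ ≫ cokernel.π (γ.perpLift i hiso)) := by
      rw [← he, ← Category.assoc, Iso.inv_hom_id, Category.id_comp]
    have hj21 : kernel.lift (γ.form ≫ 𝒟.P.map i) k₂ w₂ ≫ cokernel.π (γ.perpLift i hiso) =
        (factorThruImage (kernel.lift (γ.form ≫ 𝒟.P.map i) k₂ w₂ ≫ cokernel.π (γ.perpLift i hiso)) ≫ e.inv) ≫
        image.ι (kernel.lift (γ.form ≫ 𝒟.P.map i) k₁ w₁ ≫ cokernel.π (γ.perpLift i hiso)) := by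
      rw [Category.assoc, he', image.fac]
    have hg₂ : (kernel.lift (γ.form ≫ 𝒟.P.map i) k₂ w₂ ≫ cokernel.π (γ.perpLift i hiso)) ≫
        cokernel.π (image.ι (kernel.lift (γ.form ≫ 𝒟.P.map i) k₁ w₁ ≫ cokernel.π (γ.perpLift i hiso))) = 0 := by
      rw [hj21, Category.assoc, cokernel.condition, comp_zero]
    obtain ⟨t', ht'⟩ := abelian_preimage_lift (γ.perpLift i hiso) (kernel.lift (γ.form ≫ 𝒟.P.map i) k₁ w₁) i₁ hil₁
      (kernel.lift (γ.form ≫ 𝒟.P.map i) k₂ w₂) hg₂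
    have h1 : t ≫ t' = 𝟙 b₁ := by
      rw [← cancel_mono (kernel.lift (γ.form ≫ 𝒟.P.map i) k₁ w₁), Category.assoc, ht', ht, Category.id_comp]
    have h2 : t' ≫ t = 𝟙 b₂ := by
      rw [← cancel_mono (kernel.lift (γ.form ≫ 𝒟.P.map i) k₂ w₂), Category.assoc, ht, ht', Category.id_comp]
    refine ⟨⟨t, t', h1, h2⟩, ?_⟩
    show t ≫ k₂ = k₁
    rw [← hι₂, ← Category.assoc, ht, hι₁]
  · -- (3)
    intro t τ hτ hττ
    haveI := hτ
    haveI hpm : Mono (γ.perpLift i hiso) := mono_of_mono_fac (γ.perpLift_ι i hiso)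
    have hpι : (γ.perpLift i hiso) ≫ kernel.ι (γ.form ≫ 𝒟.P.map i) = i := γ.perpLift_ι i hiso
    have hκφ : kernel.ι (γ.form ≫ 𝒟.P.map i) ≫ (γ.form ≫ 𝒟.P.map i) = 0 := kernel.condition _
    have hcp : (γ.perpLift i hiso) ≫ cokernel.π (γ.perpLift i hiso) = 0 := cokernel.condition _
    have hp0 : (γ.perpLift i hiso) ≫ cokernel.π (γ.perpLift i hiso) ≫ cokernel.π τ = 0 := by
      rw [← Category.assoc, hcp, zero_comp]
    obtain ⟨v, hv⟩ := factor_of_comp_cokernelπ_zero τ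
      (kernel.ι (cokernel.π (γ.perpLift i hiso) ≫ cokernel.π τ) ≫ cokernel.π (γ.perpLift i hiso))
      (by rw [Category.assoc]; exact kernel.condition _)
    have hcomm : kernel.ι (cokernel.π (γ.perpLift i hiso) ≫ cokernel.π τ) ≫ cokernel.π (γ.perpLift i hiso) = v ≫ τ := hv.symm
    have hPB : IsPullback (kernel.ι (cokernel.π (γ.perpLift i hiso) ≫ cokernel.π τ)) v (cokernel.π (γ.perpLift i hiso)) τ :=
      IsPullback.of_isLimit
        (PullbackCone.IsLimit.mk hcomm
          (fun s => kernel.lift _ s.fst (by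
            rw [← Category.assoc, s.condition, Category.assoc, cokernel.condition, comp_zero]))
          (fun s => kernel.lift_ι _ _ _)
          (fun s => by
            rw [← cancel_mono τ, Category.assoc, ← hcomm, ← Category.assoc, kernel.lift_ι,
              s.condition])
          (fun s mm hm₁ _ => by
            rw [← cancel_mono (kernel.ι (cokernel.π (γ.perpLift i hiso) ≫ cokernel.π τ)), hm₁, kernel.lift_ι]))
    haveI hve : Epi v := epi_of_isPullback_of_epi hPB
    haveI : StrongEpi v := strongEpi_of_epi v
    have hbk : (kernel.ι (cokernel.π (γ.perpLift i hiso) ≫ cokernel.π τ) ≫ kernel.ι (γ.form ≫ 𝒟.P.map i)) ≫ (γ.form ≫ 𝒟.P.map i) = 0 := by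
      rw [Category.assoc, hκφ, comp_zero]
    have hilk : kernel.lift (γ.form ≫ 𝒟.P.map i) (kernel.ι (cokernel.π (γ.perpLift i hiso) ≫ cokernel.π τ) ≫ kernel.ι (γ.form ≫ 𝒟.P.map i)) hbk =
        kernel.ι (cokernel.π (γ.perpLift i hiso) ≫ cokernel.π τ) := by
      rw [← cancel_mono (kernel.ι (γ.form ≫ 𝒟.P.map i)), kernel.lift_ι]
    have hD1 : 𝒟.P.map (cokernel.π (γ.perpLift i hiso)) ≫ 𝒟.P.map (kernel.ι (cokernel.π (γ.perpLift i hiso) ≫ cokernel.π τ)) =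
        𝒟.P.map τ ≫ 𝒟.P.map v := by
      rw [← 𝒟.P.map_comp, ← 𝒟.P.map_comp, hv]
    have hk : (kernel.ι (cokernel.π (γ.perpLift i hiso) ≫ cokernel.π τ) ≫ kernel.ι (γ.form ≫ 𝒟.P.map i)) ≫ γ.form ≫
        𝒟.P.map (kernel.ι (cokernel.π (γ.perpLift i hiso) ≫ cokernel.π τ) ≫ kernel.ι (γ.form ≫ 𝒟.P.map i)) = 0 := by
      rw [𝒟.P.map_comp]
      try simp only [Category.assoc]
      slice_lhs 2 4 => rw [← hredi]
      try simp only [Category.assoc]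
      slice_lhs 1 2 => rw [← hv]
      try simp only [Category.assoc]
      slice_lhs 4 5 => rw [hD1]
      try simp only [Category.assoc]
      slice_lhs 2 4 => rw [hττ]
      simp only [zero_comp, comp_zero]
    have hvτ : v ≫ τ =
        kernel.lift (γ.form ≫ 𝒟.P.map i) (kernel.ι (cokernel.π (γ.perpLift i hiso) ≫ cokernel.π τ) ≫ kernel.ι (γ.form ≫ 𝒟.P.map i)) hbk ≫ cokernel.π (γ.perpLift i hiso) := by
      rw [hilk]; exact hv
    refine ⟨kernel (cokernel.π (γ.perpLift i hiso) ≫ cokernel.π τ),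
      kernel.lift (cokernel.π (γ.perpLift i hiso) ≫ cokernel.π τ) (γ.perpLift i hiso) hp0,
      kernel.ι (cokernel.π (γ.perpLift i hiso) ≫ cokernel.π τ) ≫ kernel.ι (γ.form ≫ 𝒟.P.map i), inferInstance, ?_, hk, hbk,
      (image.isoStrongEpiMono v τ hvτ).symm, image.isoStrongEpiMono_inv_comp_mono v τ hvτ⟩
    rw [← Category.assoc, kernel.lift_ι, hpι]
  · -- (4)
    intro b i' k hkm hfac hk wk hT
    haveI := hkm
    haveI : Mono (γ.perpLift i hiso) := mono_of_mono_fac (γ.perpLift_ι i hiso)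
    have hlι : (kernel.lift (γ.form ≫ 𝒟.P.map i) k wk) ≫ kernel.ι (γ.form ≫ 𝒟.P.map i) = k := kernel.lift_ι _ _ _
    have hpι : (γ.perpLift i hiso) ≫ kernel.ι (γ.form ≫ 𝒟.P.map i) = i := γ.perpLift_ι i hiso
    have hpbι : (γ.perpLift k hk) ≫ kernel.ι (γ.form ≫ 𝒟.P.map k) = k := γ.perpLift_ι k hk
    have hpTι : ((γ.reduce i hiso).perpLift (image.ι ((kernel.lift (γ.form ≫ 𝒟.P.map i) k wk) ≫ cokernel.π (γ.perpLift i hiso))) hT) ≫ kernel.ι ((γ.reduce i hiso).form ≫ 𝒟.P.map (image.ι ((kernel.lift (γ.form ≫ 𝒟.P.map i) k wk) ≫ cokernel.π (γ.perpLift i hiso)))) = (image.ι ((kernel.lift (γ.form ≫ 𝒟.P.map i) k wk) ≫ cokernel.π (γ.perpLift i hiso))) := (γ.reduce i hiso).perpLift_ι (image.ι ((kernel.lift (γ.form ≫ 𝒟.P.map i) k wk) ≫ cokernel.π (γ.perpLift i hiso))) hT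
    have hfacJ : (factorThruImage ((kernel.lift (γ.form ≫ 𝒟.P.map i) k wk) ≫ cokernel.π (γ.perpLift i hiso))) ≫ (image.ι ((kernel.lift (γ.form ≫ 𝒟.P.map i) k wk) ≫ cokernel.π (γ.perpLift i hiso))) = (kernel.lift (γ.form ≫ 𝒟.P.map i) k wk) ≫ cokernel.π (γ.perpLift i hiso) := image.fac _
    haveI : Mono (kernel.lift (γ.form ≫ 𝒟.P.map i) k wk) := mono_of_mono_fac hlι
    haveI : Mono ((γ.reduce i hiso).perpLift (image.ι ((kernel.lift (γ.form ≫ 𝒟.P.map i) k wk) ≫ cokernel.π (γ.perpLift i hiso))) hT) := mono_of_mono_fac hpTι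
    haveI : Mono (𝒟.P.map (factorThruImage ((kernel.lift (γ.form ≫ 𝒟.P.map i) k wk) ≫ cokernel.π (γ.perpLift i hiso)))) := 𝒟.mono_map_of_epi _
    have hil : i' ≫ (kernel.lift (γ.form ≫ 𝒟.P.map i) k wk) = (γ.perpLift i hiso) := by
      rw [← cancel_mono (kernel.ι (γ.form ≫ 𝒟.P.map i)), Category.assoc, hlι, ← hfac, hpι]
    have hκθ : kernel.ι ((γ.reduce i hiso).form ≫ 𝒟.P.map (image.ι ((kernel.lift (γ.form ≫ 𝒟.P.map i) k wk) ≫ cokernel.π (γ.perpLift i hiso)))) ≫ (γ.reduce i hiso).form ≫ 𝒟.P.map (image.ι ((kernel.lift (γ.form ≫ 𝒟.P.map i) k wk) ≫ cokernel.π (γ.perpLift i hiso))) = 0 := kernel.condition _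
    have hrc : kernel.ι (γ.form ≫ 𝒟.P.map k) ≫ (γ.form ≫ 𝒟.P.map i) = 0 := by
      have h1 : kernel.ι (γ.form ≫ 𝒟.P.map k) ≫ (γ.form ≫ 𝒟.P.map k) = 0 := kernel.condition _
      rw [hfac, 𝒟.P.map_comp]
      slice_lhs 1 3 => rw [h1]
      simp only [zero_comp]
    have hrι : kernel.lift (γ.form ≫ 𝒟.P.map i) (kernel.ι (γ.form ≫ 𝒟.P.map k)) hrc ≫ kernel.ι (γ.form ≫ 𝒟.P.map i) = kernel.ι (γ.form ≫ 𝒟.P.map k) := kernel.lift_ι _ _ _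
    haveI : Mono (kernel.lift (γ.form ≫ 𝒟.P.map i) (kernel.ι (γ.form ≫ 𝒟.P.map k)) hrc) := mono_of_mono_fac hrι
    have hDk : 𝒟.P.map (kernel.ι (γ.form ≫ 𝒟.P.map i)) ≫ 𝒟.P.map (kernel.lift (γ.form ≫ 𝒟.P.map i) k wk) = 𝒟.P.map k := by
      rw [← 𝒟.P.map_comp, hlι]
    have hDm : 𝒟.P.map (image.ι ((kernel.lift (γ.form ≫ 𝒟.P.map i) k wk) ≫ cokernel.π (γ.perpLift i hiso))) ≫ 𝒟.P.map (factorThruImage ((kernel.lift (γ.form ≫ 𝒟.P.map i) k wk) ≫ cokernel.π (γ.perpLift i hiso))) = 𝒟.P.map (cokernel.π (γ.perpLift i hiso)) ≫ 𝒟.P.map (kernel.lift (γ.form ≫ 𝒟.P.map i) k wk) := by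
      rw [← 𝒟.P.map_comp, ← 𝒟.P.map_comp, hfacJ]
    have hw0 : (kernel.lift (γ.form ≫ 𝒟.P.map i) (kernel.ι (γ.form ≫ 𝒟.P.map k)) hrc ≫ cokernel.π (γ.perpLift i hiso)) ≫ (γ.reduce i hiso).form ≫ 𝒟.P.map (image.ι ((kernel.lift (γ.form ≫ 𝒟.P.map i) k wk) ≫ cokernel.π (γ.perpLift i hiso))) = 0 := by
      rw [← cancel_mono (𝒟.P.map (factorThruImage ((kernel.lift (γ.form ≫ 𝒟.P.map i) k wk) ≫ cokernel.π (γ.perpLift i hiso)))), zero_comp]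
      try simp only [Category.assoc]
      slice_lhs 4 5 => rw [hDm]
      try simp only [Category.assoc]
      slice_lhs 2 4 => rw [hredi]
      try simp only [Category.assoc]
      slice_lhs 4 5 => rw [hDk]
      try simp only [Category.assoc]
      slice_lhs 1 2 => rw [hrι]
      try simp only [Category.assoc]
      exact kernel.condition _
    have hwι : kernel.lift ((γ.reduce i hiso).form ≫ 𝒟.P.map (image.ι ((kernel.lift (γ.form ≫ 𝒟.P.map i) k wk) ≫ cokernel.π (γ.perpLift i hiso)))) (kernel.lift (γ.form ≫ 𝒟.P.map i) (kernel.ι (γ.form ≫ 𝒟.P.map k)) hrc ≫ cokernel.π (γ.perpLift i hiso)) hw0 ≫ kernel.ι ((γ.reduce i hiso).form ≫ 𝒟.P.map (image.ι ((kernel.lift (γ.form ≫ 𝒟.P.map i) k wk) ≫ cokernel.π (γ.perpLift i hiso)))) =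
        kernel.lift (γ.form ≫ 𝒟.P.map i) (kernel.ι (γ.form ≫ 𝒟.P.map k)) hrc ≫ cokernel.π (γ.perpLift i hiso) := kernel.lift_ι _ _ _
    have hcondPB : ∀ s : PullbackCone (cokernel.π (γ.perpLift i hiso)) (kernel.ι ((γ.reduce i hiso).form ≫ 𝒟.P.map (image.ι ((kernel.lift (γ.form ≫ 𝒟.P.map i) k wk) ≫ cokernel.π (γ.perpLift i hiso))))),
        (s.fst ≫ kernel.ι (γ.form ≫ 𝒟.P.map i)) ≫ (γ.form ≫ 𝒟.P.map k) = 0 := by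
      intro s
      try simp only [Category.assoc]
      rw [← hDk]
      try simp only [Category.assoc]
      slice_lhs 2 4 => rw [← hredi]
      try simp only [Category.assoc]
      slice_lhs 4 5 => rw [← hDm]
      try simp only [Category.assoc]
      slice_lhs 1 2 => rw [s.condition]
      try simp only [Category.assoc]
      slice_lhs 2 4 => rw [hκθ]
      simp only [zero_comp, comp_zero]
    have hPB : IsPullback (kernel.lift (γ.form ≫ 𝒟.P.map i) (kernel.ι (γ.form ≫ 𝒟.P.map k)) hrc)
        (kernel.lift ((γ.reduce i hiso).form ≫ 𝒟.P.map (image.ι ((kernel.lift (γ.form ≫ 𝒟.P.map i) k wk) ≫ cokernel.π (γ.perpLift i hiso)))) (kernel.lift (γ.form ≫ 𝒟.P.map i) (kernel.ι (γ.form ≫ 𝒟.P.map k)) hrc ≫ cokernel.π (γ.perpLift i hiso)) hw0) (cokernel.π (γ.perpLift i hiso)) (kernel.ι ((γ.reduce i hiso).form ≫ 𝒟.P.map (image.ι ((kernel.lift (γ.form ≫ 𝒟.P.map i) k wk) ≫ cokernel.π (γ.perpLift i hiso))))) :=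
      IsPullback.of_isLimit
        (PullbackCone.IsLimit.mk hwι.symm
          (fun s => kernel.lift (γ.form ≫ 𝒟.P.map k) (s.fst ≫ kernel.ι (γ.form ≫ 𝒟.P.map i)) (hcondPB s))
          (fun s => by
            rw [← cancel_mono (kernel.ι (γ.form ≫ 𝒟.P.map i)), Category.assoc, hrι, kernel.lift_ι])
          (fun s => by
            have h5 : kernel.lift (γ.form ≫ 𝒟.P.map k) (s.fst ≫ kernel.ι (γ.form ≫ 𝒟.P.map i)) (hcondPB s) ≫
                kernel.lift (γ.form ≫ 𝒟.P.map i) (kernel.ι (γ.form ≫ 𝒟.P.map k)) hrc = s.fst := by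
              rw [← cancel_mono (kernel.ι (γ.form ≫ 𝒟.P.map i)), Category.assoc, hrι, kernel.lift_ι]
            rw [← cancel_mono (kernel.ι ((γ.reduce i hiso).form ≫ 𝒟.P.map (image.ι ((kernel.lift (γ.form ≫ 𝒟.P.map i) k wk) ≫ cokernel.π (γ.perpLift i hiso))))), Category.assoc, hwι, ← Category.assoc, h5,
              s.condition])
          (fun s mm hm₁ _ => by
            have h5 : kernel.lift (γ.form ≫ 𝒟.P.map k) (s.fst ≫ kernel.ι (γ.form ≫ 𝒟.P.map i)) (hcondPB s) ≫
                kernel.lift (γ.form ≫ 𝒟.P.map i) (kernel.ι (γ.form ≫ 𝒟.P.map k)) hrc = s.fst := by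
              rw [← cancel_mono (kernel.ι (γ.form ≫ 𝒟.P.map i)), Category.assoc, hrι, kernel.lift_ι]
            rw [← cancel_mono (kernel.lift (γ.form ≫ 𝒟.P.map i) (kernel.ι (γ.form ≫ 𝒟.P.map k)) hrc), hm₁, h5]))
    haveI : Epi (kernel.lift ((γ.reduce i hiso).form ≫ 𝒟.P.map (image.ι ((kernel.lift (γ.form ≫ 𝒟.P.map i) k wk) ≫ cokernel.π (γ.perpLift i hiso)))) (kernel.lift (γ.form ≫ 𝒟.P.map i) (kernel.ι (γ.form ≫ 𝒟.P.map k)) hrc ≫ cokernel.π (γ.perpLift i hiso)) hw0) :=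
      epi_of_isPullback_of_epi hPB
    have hpar : (i' ≫ (γ.perpLift k hk)) ≫ kernel.lift (γ.form ≫ 𝒟.P.map i) (kernel.ι (γ.form ≫ 𝒟.P.map k)) hrc = (γ.perpLift i hiso) := by
      rw [Category.assoc, ← cancel_mono (kernel.ι (γ.form ≫ 𝒟.P.map i)), Category.assoc, Category.assoc, hrι,
        hpbι, ← hfac, hpι]
    have hker : ∀ {Z : A} (d : Z ⟶ kernel (γ.form ≫ 𝒟.P.map k)),
        d ≫ kernel.lift ((γ.reduce i hiso).form ≫ 𝒟.P.map (image.ι ((kernel.lift (γ.form ≫ 𝒟.P.map i) k wk) ≫ cokernel.π (γ.perpLift i hiso)))) (kernel.lift (γ.form ≫ 𝒟.P.map i) (kernel.ι (γ.form ≫ 𝒟.P.map k)) hrc ≫ cokernel.π (γ.perpLift i hiso)) hw0 = 0 →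
        ∃ s : Z ⟶ a, s ≫ (i' ≫ (γ.perpLift k hk)) = d := by
      intro Z d hd
      have h6 : (d ≫ kernel.lift (γ.form ≫ 𝒟.P.map i) (kernel.ι (γ.form ≫ 𝒟.P.map k)) hrc) ≫ cokernel.π (γ.perpLift i hiso) = 0 := by
        rw [Category.assoc, ← hwι, ← Category.assoc, hd, zero_comp]
      obtain ⟨s, hs⟩ := factor_of_comp_cokernelπ_zero (γ.perpLift i hiso) _ h6
      refine ⟨s, ?_⟩
      rw [← cancel_mono (kernel.lift (γ.form ≫ 𝒟.P.map i) (kernel.ι (γ.form ≫ 𝒟.P.map k)) hrc), Category.assoc, hpar, hs]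
    have hpbr : (γ.perpLift k hk) ≫ kernel.lift (γ.form ≫ 𝒟.P.map i) (kernel.ι (γ.form ≫ 𝒟.P.map k)) hrc = (kernel.lift (γ.form ≫ 𝒟.P.map i) k wk) := by
      rw [← cancel_mono (kernel.ι (γ.form ≫ 𝒟.P.map i)), Category.assoc, hrι, hpbι, hlι]
    have hpbw : (γ.perpLift k hk) ≫ kernel.lift ((γ.reduce i hiso).form ≫ 𝒟.P.map (image.ι ((kernel.lift (γ.form ≫ 𝒟.P.map i) k wk) ≫ cokernel.π (γ.perpLift i hiso)))) (kernel.lift (γ.form ≫ 𝒟.P.map i) (kernel.ι (γ.form ≫ 𝒟.P.map k)) hrc ≫ cokernel.π (γ.perpLift i hiso)) hw0 =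
        (factorThruImage ((kernel.lift (γ.form ≫ 𝒟.P.map i) k wk) ≫ cokernel.π (γ.perpLift i hiso))) ≫ ((γ.reduce i hiso).perpLift (image.ι ((kernel.lift (γ.form ≫ 𝒟.P.map i) k wk) ≫ cokernel.π (γ.perpLift i hiso))) hT) := by
      rw [← cancel_mono (kernel.ι ((γ.reduce i hiso).form ≫ 𝒟.P.map (image.ι ((kernel.lift (γ.form ≫ 𝒟.P.map i) k wk) ≫ cokernel.π (γ.perpLift i hiso))))), Category.assoc, hwι, ← Category.assoc, hpbr,
        Category.assoc, hpTι, hfacJ]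
    have h0u : (γ.perpLift k hk) ≫ kernel.lift ((γ.reduce i hiso).form ≫ 𝒟.P.map (image.ι ((kernel.lift (γ.form ≫ 𝒟.P.map i) k wk) ≫ cokernel.π (γ.perpLift i hiso)))) (kernel.lift (γ.form ≫ 𝒟.P.map i) (kernel.ι (γ.form ≫ 𝒟.P.map k)) hrc ≫ cokernel.π (γ.perpLift i hiso)) hw0 ≫
        cokernel.π ((γ.reduce i hiso).perpLift (image.ι ((kernel.lift (γ.form ≫ 𝒟.P.map i) k wk) ≫ cokernel.π (γ.perpLift i hiso))) hT) = 0 := by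
      rw [← Category.assoc, hpbw, Category.assoc, cokernel.condition, comp_zero]
    have hπu : cokernel.π (γ.perpLift k hk) ≫ cokernel.desc (γ.perpLift k hk)
        (kernel.lift ((γ.reduce i hiso).form ≫ 𝒟.P.map (image.ι ((kernel.lift (γ.form ≫ 𝒟.P.map i) k wk) ≫ cokernel.π (γ.perpLift i hiso)))) (kernel.lift (γ.form ≫ 𝒟.P.map i) (kernel.ι (γ.form ≫ 𝒟.P.map k)) hrc ≫ cokernel.π (γ.perpLift i hiso)) hw0 ≫ cokernel.π ((γ.reduce i hiso).perpLift (image.ι ((kernel.lift (γ.form ≫ 𝒟.P.map i) k wk) ≫ cokernel.π (γ.perpLift i hiso))) hT)) h0u =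
        kernel.lift ((γ.reduce i hiso).form ≫ 𝒟.P.map (image.ι ((kernel.lift (γ.form ≫ 𝒟.P.map i) k wk) ≫ cokernel.π (γ.perpLift i hiso)))) (kernel.lift (γ.form ≫ 𝒟.P.map i) (kernel.ι (γ.form ≫ 𝒟.P.map k)) hrc ≫ cokernel.π (γ.perpLift i hiso)) hw0 ≫ cokernel.π ((γ.reduce i hiso).perpLift (image.ι ((kernel.lift (γ.form ≫ 𝒟.P.map i) k wk) ≫ cokernel.π (γ.perpLift i hiso))) hT) :=
      cokernel.π_desc _ _ _
    haveI : Mono (cokernel.desc (γ.perpLift k hk)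
        (kernel.lift ((γ.reduce i hiso).form ≫ 𝒟.P.map (image.ι ((kernel.lift (γ.form ≫ 𝒟.P.map i) k wk) ≫ cokernel.π (γ.perpLift i hiso)))) (kernel.lift (γ.form ≫ 𝒟.P.map i) (kernel.ι (γ.form ≫ 𝒟.P.map k)) hrc ≫ cokernel.π (γ.perpLift i hiso)) hw0 ≫ cokernel.π ((γ.reduce i hiso).perpLift (image.ι ((kernel.lift (γ.form ≫ 𝒟.P.map i) k wk) ≫ cokernel.π (γ.perpLift i hiso))) hT)) h0u) :=
      abelian_mono_desc (γ.perpLift k hk) _ ((γ.reduce i hiso).perpLift (image.ι ((kernel.lift (γ.form ≫ 𝒟.P.map i) k wk) ≫ cokernel.π (γ.perpLift i hiso))) hT) (factorThruImage ((kernel.lift (γ.form ≫ 𝒟.P.map i) k wk) ≫ cokernel.π (γ.perpLift i hiso))) hpbw (i' ≫ (γ.perpLift k hk)) i' rfl hker h0u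
    haveI h7 : Epi (cokernel.π (γ.perpLift k hk) ≫ cokernel.desc (γ.perpLift k hk)
        (kernel.lift ((γ.reduce i hiso).form ≫ 𝒟.P.map (image.ι ((kernel.lift (γ.form ≫ 𝒟.P.map i) k wk) ≫ cokernel.π (γ.perpLift i hiso)))) (kernel.lift (γ.form ≫ 𝒟.P.map i) (kernel.ι (γ.form ≫ 𝒟.P.map k)) hrc ≫ cokernel.π (γ.perpLift i hiso)) hw0 ≫ cokernel.π ((γ.reduce i hiso).perpLift (image.ι ((kernel.lift (γ.form ≫ 𝒟.P.map i) k wk) ≫ cokernel.π (γ.perpLift i hiso))) hT)) h0u) := by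
      rw [hπu]; exact epi_comp _ _
    haveI : Epi (cokernel.desc (γ.perpLift k hk)
        (kernel.lift ((γ.reduce i hiso).form ≫ 𝒟.P.map (image.ι ((kernel.lift (γ.form ≫ 𝒟.P.map i) k wk) ≫ cokernel.π (γ.perpLift i hiso)))) (kernel.lift (γ.form ≫ 𝒟.P.map i) (kernel.ι (γ.form ≫ 𝒟.P.map k)) hrc ≫ cokernel.π (γ.perpLift i hiso)) hw0 ≫ cokernel.π ((γ.reduce i hiso).perpLift (image.ι ((kernel.lift (γ.form ≫ 𝒟.P.map i) k wk) ≫ cokernel.π (γ.perpLift i hiso))) hT)) h0u) :=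
      epi_of_epi (cokernel.π (γ.perpLift k hk)) _
    haveI : IsIso (cokernel.desc (γ.perpLift k hk)
        (kernel.lift ((γ.reduce i hiso).form ≫ 𝒟.P.map (image.ι ((kernel.lift (γ.form ≫ 𝒟.P.map i) k wk) ≫ cokernel.π (γ.perpLift i hiso)))) (kernel.lift (γ.form ≫ 𝒟.P.map i) (kernel.ι (γ.form ≫ 𝒟.P.map k)) hrc ≫ cokernel.π (γ.perpLift i hiso)) hw0 ≫ cokernel.π ((γ.reduce i hiso).perpLift (image.ι ((kernel.lift (γ.form ≫ 𝒟.P.map i) k wk) ≫ cokernel.π (γ.perpLift i hiso))) hT)) h0u) :=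
      isIso_of_mono_of_epi _
    refine ⟨cokernel.desc (γ.perpLift k hk)
        (kernel.lift ((γ.reduce i hiso).form ≫ 𝒟.P.map (image.ι ((kernel.lift (γ.form ≫ 𝒟.P.map i) k wk) ≫ cokernel.π (γ.perpLift i hiso)))) (kernel.lift (γ.form ≫ 𝒟.P.map i) (kernel.ι (γ.form ≫ 𝒟.P.map k)) hrc ≫ cokernel.π (γ.perpLift i hiso)) hw0 ≫ cokernel.π ((γ.reduce i hiso).perpLift (image.ι ((kernel.lift (γ.form ≫ 𝒟.P.map i) k wk) ≫ cokernel.π (γ.perpLift i hiso))) hT)) h0u,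
      inferInstance, ?_⟩
    haveI : Mono (𝒟.P.map (cokernel.π (γ.perpLift k hk))) := 𝒟.mono_map_of_epi _
    have hredk := γ.reduce_fac k hk
    have hredm := (γ.reduce i hiso).reduce_fac (image.ι ((kernel.lift (γ.form ≫ 𝒟.P.map i) k wk) ≫ cokernel.π (γ.perpLift i hiso))) hT
    have hDu : 𝒟.P.map (cokernel.desc (γ.perpLift k hk)
        (kernel.lift ((γ.reduce i hiso).form ≫ 𝒟.P.map (image.ι ((kernel.lift (γ.form ≫ 𝒟.P.map i) k wk) ≫ cokernel.π (γ.perpLift i hiso)))) (kernel.lift (γ.form ≫ 𝒟.P.map i) (kernel.ι (γ.form ≫ 𝒟.P.map k)) hrc ≫ cokernel.π (γ.perpLift i hiso)) hw0 ≫ cokernel.π ((γ.reduce i hiso).perpLift (image.ι ((kernel.lift (γ.form ≫ 𝒟.P.map i) k wk) ≫ cokernel.π (γ.perpLift i hiso))) hT)) h0u) ≫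
        𝒟.P.map (cokernel.π (γ.perpLift k hk)) =
        𝒟.P.map (cokernel.π ((γ.reduce i hiso).perpLift (image.ι ((kernel.lift (γ.form ≫ 𝒟.P.map i) k wk) ≫ cokernel.π (γ.perpLift i hiso))) hT)) ≫
        𝒟.P.map (kernel.lift ((γ.reduce i hiso).form ≫ 𝒟.P.map (image.ι ((kernel.lift (γ.form ≫ 𝒟.P.map i) k wk) ≫ cokernel.π (γ.perpLift i hiso)))) (kernel.lift (γ.form ≫ 𝒟.P.map i) (kernel.ι (γ.form ≫ 𝒟.P.map k)) hrc ≫ cokernel.π (γ.perpLift i hiso)) hw0) := by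
      rw [← 𝒟.P.map_comp, ← 𝒟.P.map_comp, hπu]
    have hDw : 𝒟.P.map (kernel.ι ((γ.reduce i hiso).form ≫ 𝒟.P.map (image.ι ((kernel.lift (γ.form ≫ 𝒟.P.map i) k wk) ≫ cokernel.π (γ.perpLift i hiso))))) ≫
        𝒟.P.map (kernel.lift ((γ.reduce i hiso).form ≫ 𝒟.P.map (image.ι ((kernel.lift (γ.form ≫ 𝒟.P.map i) k wk) ≫ cokernel.π (γ.perpLift i hiso)))) (kernel.lift (γ.form ≫ 𝒟.P.map i) (kernel.ι (γ.form ≫ 𝒟.P.map k)) hrc ≫ cokernel.π (γ.perpLift i hiso)) hw0) =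
        𝒟.P.map (cokernel.π (γ.perpLift i hiso)) ≫ 𝒟.P.map (kernel.lift (γ.form ≫ 𝒟.P.map i) (kernel.ι (γ.form ≫ 𝒟.P.map k)) hrc) := by
      rw [← 𝒟.P.map_comp, ← 𝒟.P.map_comp, hwι]
    have hDr : 𝒟.P.map (kernel.ι (γ.form ≫ 𝒟.P.map i)) ≫ 𝒟.P.map (kernel.lift (γ.form ≫ 𝒟.P.map i) (kernel.ι (γ.form ≫ 𝒟.P.map k)) hrc) = 𝒟.P.map (kernel.ι (γ.form ≫ 𝒟.P.map k)) := by
      rw [← 𝒟.P.map_comp, hrι]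
    rw [← cancel_epi (cokernel.π (γ.perpLift k hk)), ← cancel_mono (𝒟.P.map (cokernel.π (γ.perpLift k hk)))]
    try simp only [Category.assoc]
    rw [hredk]
    slice_rhs 4 5 => rw [hDu]
    try simp only [Category.assoc]
    slice_rhs 1 2 => rw [hπu]
    try simp only [Category.assoc]
    rw [reassoc_of% hredm]
    try simp only [Category.assoc]
    slice_rhs 4 5 => rw [hDw]
    try simp only [Category.assoc]
    slice_rhs 1 2 => rw [hwι]
    try simp only [Category.assoc]
    slice_rhs 2 4 => rw [hredi]
    try simp only [Category.assoc]
    slice_rhs 4 5 => rw [hDr]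
    try simp only [Category.assoc]
    slice_rhs 1 2 => rw [hrι]
    try simp only [Category.assoc]
end
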